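/- arXiv:2010.07206 — 4 statements merged into one kernel-verified Lean document; each statement's English description precedes it below -/
import Mathlib

section
/- Let E be a Dedekind complete Riesz space with weak order unit e, T a conditional expectation operator on E with Te = e, and S an order continuous Riesz homomorphism on E with Se = e. Then TSPe = TPe for every band projection P on E if and only if TSf = Tf for all f ∈ E. -/
open Finset

/- `E` is a Riesz space (real vector lattice). -/
variable {E : Type*} [AddCommGroup E] [Lattice E]
  [CovariantClass E E (· + ·) (· ≤ ·)] [Module ℝ E] [PosSMulMono ℝ E]

/-- A sequence `u` in `E` order converges to `l` if there is a sequence `p` decreasing to `0`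
with `|u n - l| ≤ p n` for all `n`. -/
def OrderConv (u : ℕ → E) (l : E) : Prop :=
  ∃ p : ℕ → E, Antitone p ∧ IsGLB (Set.range p) 0 ∧ ∀ n, |u n - l| ≤ p n

/-- `l` is the greatest lower bound of `A` relative to the subset `F`. -/
def IsGLBIn (F A : Set E) (l : E) : Prop :=
  (∀ a ∈ A, l ≤ a) ∧ ∀ b ∈ F, (∀ a ∈ A, b ≤ a) → b ≤ l

/-- `F` is Dedekind complete (in its induced order): every nonempty subset of `F`
bounded above in `F` has a supremum in `F`. -/
def DedekindCompleteIn (F : Set E) : Prop :=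
  ∀ A : Set E, A ⊆ F → A.Nonempty → (∃ b ∈ F, ∀ a ∈ A, a ≤ b) →
    ∃ s ∈ F, (∀ a ∈ A, a ≤ s) ∧ ∀ b ∈ F, (∀ a ∈ A, a ≤ b) → s ≤ b

/-- `u` is a weak order unit of (the Riesz subspace) `F`:  `u > 0` and the band generated by
`u` is everything, equivalently no nonzero positive element of `F` is disjoint from `u`. -/
def IsWeakOrderUnitIn (F : Set E) (u : E) : Prop :=
  0 < u ∧ ∀ f ∈ F, 0 ≤ f → f ⊓ u = 0 → f = 0

/-- Band projections on a Riesz space: the linear idempotents `P` with `0 ≤ P ≤ I`. -/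
def IsBandProjection (P : E →ₗ[ℝ] E) : Prop :=
  (∀ f, P (P f) = P f) ∧ ∀ f, 0 ≤ f → 0 ≤ P f ∧ P f ≤ f

/-- `L` (restricted to `F`) is a conditional expectation operator on `F`: a positive
order continuous linear projection whose range is a Dedekind complete Riesz subspace and
which maps weak order units to weak order units. -/
def IsCondExpOn (F : Set E) (L : E → E) : Prop :=
  (∀ f ∈ F, L f ∈ F) ∧
  (∀ f ∈ F, ∀ g ∈ F, L (f + g) = L f + L g) ∧
  (∀ r : ℝ, ∀ f ∈ F, L (r • f) = r • L f) ∧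
  (∀ f ∈ F, 0 ≤ f → 0 ≤ L f) ∧
  (∀ A : Set E, A ⊆ F → A.Nonempty → DirectedOn (· ≥ ·) A → IsGLBIn F A 0 →
      IsGLBIn F (L '' A) 0) ∧
  (∀ f ∈ F, L (L f) = L f) ∧
  (∀ f ∈ L '' F, ∀ g ∈ L '' F, f ⊔ g ∈ L '' F) ∧
  DedekindCompleteIn (L '' F) ∧
  (∀ u ∈ F, IsWeakOrderUnitIn F u → IsWeakOrderUnitIn F (L u))

/-- Order continuity of a positive operator: downward directed sets with infimum `0`
are mapped to sets with infimum `0`. -/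
def OrderContinuousOp (S : E →ₗ[ℝ] E) : Prop :=
  ∀ A : Set E, A.Nonempty → DirectedOn (· ≥ ·) A → IsGLB A 0 → IsGLB (S '' A) 0

/-- Riesz homomorphism: a linear map preserving the lattice operations. -/
def IsRieszHom (S : E →ₗ[ℝ] E) : Prop := ∀ f g, S (f ⊔ g) = S f ⊔ S g

/-- `(E,T,S,e)` is a conditional expectation preserving system: `E` is a Dedekind complete
Riesz space with weak order unit `e`, `T` a conditional expectation operator on `E` with
`Te = e`, and `S` an order continuous Riesz homomorphism with `Se = e` and `TSPe = TPe`
for every band projection `P` on `E`. -/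
def IsCEPS (T S : E →ₗ[ℝ] E) (e : E) : Prop :=
  DedekindCompleteIn (Set.univ : Set E) ∧
  IsWeakOrderUnitIn (Set.univ : Set E) e ∧
  IsCondExpOn Set.univ T ∧ T e = e ∧
  IsRieszHom S ∧ OrderContinuousOp S ∧ S e = e ∧
  ∀ P : E →ₗ[ℝ] E, IsBandProjection P → T (S (P e)) = T (P e)

/-- The Cesàro means `S_n f = (1/n) ∑_{k=0}^{n-1} S^k f`. -/
noncomputable def ces (S : E →ₗ[ℝ] E) (f : E) (n : ℕ) : E :=
  (n : ℝ)⁻¹ • ∑ k ∈ Finset.range n, (S ^ k) f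

/-- The principal ideal `E_e` generated by `e`. -/
def idealE (e : E) : Set E := {f : E | ∃ k : ℝ, 0 ≤ k ∧ |f| ≤ k • e}

/-- The system `(E,T,S,e)` is ergodic if `L_S f ∈ R(T)` for every `S`-invariant `f`
(where `L_S f` is any order limit of the Cesàro means of `f`). -/
def IsErgodic (T S : E →ₗ[ℝ] E) (e : E) : Prop :=
  ∀ f l : E, S f = f → OrderConv (ces S f) l → l ∈ Set.range T

namespace CEPSAux

variable {E : Type*} [AddCommGroup E] [Lattice E]
  [CovariantClass E E (· + ·) (· ≤ ·)] [Module ℝ E] [PosSMulMono ℝ E]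

/-! ### Elementary scalar/lattice lemmas -/

lemma smul_mono_scalar {r s : ℝ} {x : E} (h : r ≤ s) (hx : 0 ≤ x) : r • x ≤ s • x := by
  have h1 : 0 ≤ (s - r) • x := smul_nonneg (by linarith) hx
  rw [sub_smul] at h1
  exact sub_nonneg.mp h1

lemma smul_sup' (r : ℝ) (hr : 0 ≤ r) (x y : E) : r • (x ⊔ y) = r • x ⊔ r • y := by
  rcases hr.eq_or_lt with h | h
  · simp [← h]
  · refine le_antisymm ?_ (sup_le (smul_le_smul_of_nonneg_left le_sup_left hr)
      (smul_le_smul_of_nonneg_left le_sup_right hr))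
    have h1 : x ⊔ y ≤ r⁻¹ • (r • x ⊔ r • y) := by
      refine sup_le ?_ ?_
      · have h2 := smul_le_smul_of_nonneg_left (le_sup_left : r • x ≤ r • x ⊔ r • y)
          (inv_nonneg.mpr hr)
        rwa [inv_smul_smul₀ h.ne' x] at h2
      · have h2 := smul_le_smul_of_nonneg_left (le_sup_right : r • y ≤ r • x ⊔ r • y)
          (inv_nonneg.mpr hr)
        rwa [inv_smul_smul₀ h.ne' y] at h2
    calc r • (x ⊔ y) ≤ r • (r⁻¹ • (r • x ⊔ r • y)) := smul_le_smul_of_nonneg_left h1 hr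
      _ = r • x ⊔ r • y := smul_inv_smul₀ h.ne' _

lemma smul_inf' (r : ℝ) (hr : 0 ≤ r) (x y : E) : r • (x ⊓ y) = r • x ⊓ r • y := by
  have h := smul_sup' r hr (-x) (-y)
  have h2 : x ⊓ y = -((-x) ⊔ (-y)) := by rw [neg_sup, neg_neg, neg_neg]
  rw [h2, smul_neg, h, neg_sup, ← smul_neg, ← smul_neg, neg_neg, neg_neg]

lemma posSub (x : E) : (x ⊔ 0) - ((-x) ⊔ 0) = x := by
  have h : (-x) ⊔ 0 = -(x ⊓ 0) := by rw [neg_inf, neg_zero]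
  rw [h, sub_neg_eq_add, add_comm, inf_add_sup, add_zero]

lemma pos_inf_neg (x : E) : (x ⊔ 0) ⊓ ((-x) ⊔ 0) = 0 := by
  have h := posPart_inf_negPart_eq_zero x
  simpa [posPart_def, negPart_def] using h

lemma add_inf_le3 {a b c : E} (ha : 0 ≤ a) (hb : 0 ≤ b) (hc : 0 ≤ c) :
    (a + b) ⊓ c ≤ a ⊓ c + b ⊓ c := by
  have h : a ⊓ c + b ⊓ c = ((a + b) ⊓ (a + c)) ⊓ ((c + b) ⊓ (c + c)) := by
    rw [inf_add a c (b ⊓ c), add_inf b c a, add_inf b c c]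
  rw [h]
  refine le_inf (le_inf inf_le_left (inf_le_right.trans (le_add_of_nonneg_left ha)))
    (le_inf (inf_le_right.trans (le_add_of_nonneg_right hb))
      (inf_le_right.trans (le_add_of_nonneg_right hc)))

lemma inf_smul_disjoint {g h : E} (hg : 0 ≤ g) (hh : 0 ≤ h) (hd : h ⊓ g = 0)
    {t : ℝ} (ht : 0 ≤ t) : h ⊓ t • g = 0 := by
  have hnat : ∀ n : ℕ, h ⊓ (n : ℝ) • g = 0 := by
    intro n
    induction n with
    | zero => simpa using inf_eq_right.mpr hh
    | succ n ih =>
      have e1 : ((n + 1 : ℕ) : ℝ) • g = (n : ℝ) • g + g := by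
        push_cast; rw [add_smul, one_smul]
      have h1 : h ⊓ ((n : ℝ) • g + g) ≤ h ⊓ ((n : ℝ) • g) + h ⊓ g := by
        have h2 := add_inf_le3 (smul_nonneg (Nat.cast_nonneg n : (0:ℝ) ≤ (n:ℝ)) hg) hg hh
        rw [inf_comm ((n:ℝ) • g + g) h] at h2
        rw [inf_comm ((n:ℝ) • g) h, inf_comm g h] at h2
        exact h2
      rw [e1]
      refine le_antisymm (h1.trans ?_) (le_inf hh (add_nonneg (smul_nonneg (Nat.cast_nonneg n : (0:ℝ) ≤ (n:ℝ)) hg) hg))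
      rw [ih, hd, add_zero]
  have h2 : t • g ≤ ((⌈t⌉₊ : ℕ) : ℝ) • g := smul_mono_scalar (Nat.le_ceil t) hg
  exact le_antisymm ((inf_le_inf_left h h2).trans (hnat ⌈t⌉₊).le)
    (le_inf hh (smul_nonneg ht hg))

lemma inf_add_decomp (x u v : E) (hv : 0 ≤ v) :
    x ⊓ (u + v) = x ⊓ u + (((x - u) ⊔ 0) ⊓ v) := by
  have i1 : ∀ a b : E, a - ((a - b) ⊔ 0) = a ⊓ b := by
    intro a b; rw [sub_sup, sub_sub_cancel, sub_zero, inf_comm]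
  have i2 : (x - u - v) ⊔ 0 = (((x - u) ⊔ 0) - v) ⊔ 0 := by
    apply le_antisymm
    · exact sup_le (le_sup_of_le_left (sub_le_sub_right le_sup_left v)) le_sup_right
    · have h : ((x - u) ⊔ 0) - v = (x - u - v) ⊔ (0 - v) := sup_sub (x - u) 0 v
      rw [h, zero_sub]
      exact sup_le (sup_le le_sup_left ((neg_nonpos.mpr hv).trans le_sup_right)) le_sup_right
  have i3 : x ⊓ (u + v) = x - ((x - u - v) ⊔ 0) := by
    rw [← i1 x (u + v), sub_add_eq_sub_sub]
  have i4 : x ⊓ u = x - ((x - u) ⊔ 0) := (i1 x u).symm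
  rw [i3, i4, i2]
  have i5 : ((x - u) ⊔ 0) - ((((x - u) ⊔ 0) - v) ⊔ 0) = ((x - u) ⊔ 0) ⊓ v := i1 _ v
  rw [← i5]; abel

/-! ### Suprema from Dedekind completeness -/

lemma exists_isLUB' (hD : DedekindCompleteIn (Set.univ : Set E)) {A : Set E}
    (h1 : A.Nonempty) (h2 : BddAbove A) : ∃ s, IsLUB A s := by
  obtain ⟨b, hb⟩ := h2
  obtain ⟨s, -, h3, h4⟩ := hD A A.subset_univ h1 ⟨b, Set.mem_univ b, fun a ha => hb ha⟩
  exact ⟨s, fun a ha => h3 a ha, fun c hc => h4 c (Set.mem_univ c) fun a ha => hc ha⟩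

open Classical in
noncomputable def osup (A : Set E) : E := if h : ∃ s, IsLUB A s then h.choose else 0

lemma isLUB_osup (hD : DedekindCompleteIn (Set.univ : Set E)) {A : Set E}
    (h1 : A.Nonempty) (h2 : BddAbove A) : IsLUB A (osup A) := by
  classical
  have h := exists_isLUB' hD h1 h2
  unfold osup
  rw [dif_pos h]
  exact h.choose_spec

lemma arch (hD : DedekindCompleteIn (Set.univ : Set E)) {x y : E}
    (h : ∀ n : ℕ, (n : ℝ) • x ≤ y) : x ≤ 0 := by
  have h1 : (Set.range fun n : ℕ => (n : ℝ) • x).Nonempty := Set.range_nonempty _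
  have h2 : BddAbove (Set.range fun n : ℕ => (n : ℝ) • x) := by
    refine ⟨y, ?_⟩; rintro _ ⟨n, rfl⟩; exact h n
  have hl := isLUB_osup hD h1 h2
  set s := osup (Set.range fun n : ℕ => (n : ℝ) • x) with hs
  have hub : ∀ n : ℕ, (n : ℝ) • x ≤ s - x := by
    intro n
    have h3 := hl.1 (Set.mem_range_self (n + 1))
    have e1 : ((n + 1 : ℕ) : ℝ) • x = (n : ℝ) • x + x := by push_cast; rw [add_smul, one_smul]
    rw [e1] at h3
    exact le_sub_iff_add_le.mpr h3
  have h4 : s ≤ s - x := hl.2 (by rintro _ ⟨n, rfl⟩; exact hub n)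
  have h5 : s + x ≤ s := le_sub_iff_add_le.mp h4
  exact (add_le_iff_nonpos_right s).mp h5

lemma isLUB_add_const {A : Set E} {s : E} (h : IsLUB A s) (c : E) :
    IsLUB ((fun x => c + x) '' A) (c + s) := by
  constructor
  · rintro _ ⟨a, ha, rfl⟩; exact add_le_add_right (h.1 ha) c
  · intro b hb
    have h1 : s ≤ -c + b := h.2 (fun a ha => by
      have h2 := hb (Set.mem_image_of_mem _ ha)
      exact le_neg_add_iff_add_le.mpr h2)
    calc c + s ≤ c + (-c + b) := add_le_add_right h1 c
      _ = b := by abel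

lemma isLUB_smul' {A : Set E} {s : E} (h : IsLUB A s) {r : ℝ} (hr : 0 < r) :
    IsLUB ((fun x => r • x) '' A) (r • s) := by
  constructor
  · rintro _ ⟨a, ha, rfl⟩; exact smul_le_smul_of_nonneg_left (h.1 ha) hr.le
  · intro b hb
    have h1 : s ≤ r⁻¹ • b := h.2 (fun a ha => by
      have h2 := hb (Set.mem_image_of_mem _ ha)
      have h3 := smul_le_smul_of_nonneg_left h2 (inv_nonneg.mpr hr.le)
      rwa [inv_smul_smul₀ hr.ne'] at h3)
    have h4 := smul_le_smul_of_nonneg_left h1 hr.le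
    rwa [smul_inv_smul₀ hr.ne'] at h4

/-! ### The band projection generated by a positive element -/

def ppSet (g x : E) : Set E := {y | ∃ t : ℝ, 0 ≤ t ∧ y = x ⊓ t • g}

noncomputable def pp (g x : E) : E := osup (ppSet g x)

lemma ppSet_nonempty (g x : E) : (ppSet g x).Nonempty :=
  ⟨x ⊓ (0 : ℝ) • g, 0, le_refl 0, rfl⟩

lemma ppSet_bddAbove (g x : E) : BddAbove (ppSet g x) := by
  refine ⟨x, ?_⟩; rintro _ ⟨t, -, rfl⟩; exact inf_le_left

variable (hD : DedekindCompleteIn (Set.univ : Set E))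

include hD

lemma isLUB_pp (g x : E) : IsLUB (ppSet g x) (pp g x) :=
  isLUB_osup hD (ppSet_nonempty g x) (ppSet_bddAbove g x)

lemma le_pp {g x : E} {t : ℝ} (ht : 0 ≤ t) : x ⊓ t • g ≤ pp g x :=
  (isLUB_pp hD g x).1 ⟨t, ht, rfl⟩

lemma pp_le (g x : E) : pp g x ≤ x :=
  (isLUB_pp hD g x).2 (by rintro _ ⟨t, -, rfl⟩; exact inf_le_left)

lemma pp_ub {g x b : E} (hb : ∀ t : ℝ, 0 ≤ t → x ⊓ t • g ≤ b) : pp g x ≤ b :=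
  (isLUB_pp hD g x).2 (by rintro _ ⟨t, ht, rfl⟩; exact hb t ht)

lemma pp_nonneg {g x : E} (hx : 0 ≤ x) : 0 ≤ pp g x := by
  have h : x ⊓ (0 : ℝ) • g = 0 := by rw [zero_smul]; exact inf_eq_right.mpr hx
  have h2 := le_pp hD (g := g) (x := x) (le_refl (0 : ℝ))
  rwa [h] at h2

lemma pp_zero (g : E) : pp g 0 = 0 :=
  le_antisymm (pp_le hD g 0) (pp_nonneg hD le_rfl)

lemma pp_add {g x y : E} (hg : 0 ≤ g) (hx : 0 ≤ x) (hy : 0 ≤ y) :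
    pp g (x + y) = pp g x + pp g y := by
  apply le_antisymm
  · refine pp_ub hD fun t ht => ?_
    have h1 : (x + y) ⊓ (t • g) ≤ x ⊓ (t • g) + y ⊓ (t • g) :=
      add_inf_le3 hx hy (smul_nonneg ht hg)
    exact h1.trans (add_le_add (le_pp hD ht) (le_pp hD ht))
  · have key : ∀ t : ℝ, 0 ≤ t → (y ⊓ t • g) + pp g x ≤ pp g (x + y) := by
      intro t ht
      have h2 := isLUB_add_const (isLUB_pp hD g x) (y ⊓ t • g)
      refine h2.2 ?_
      rintro _ ⟨_, ⟨s, hs, rfl⟩, rfl⟩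
      have h3 : y ⊓ t • g + x ⊓ s • g ≤ (x + y) ⊓ ((s + t) • g) := by
        refine le_inf ((add_le_add inf_le_left inf_le_left).trans_eq (add_comm y x)) ?_
        refine (add_le_add inf_le_right inf_le_right).trans_eq ?_
        rw [← add_smul, add_comm t s]
      exact h3.trans (le_pp hD (by linarith))
    have h4 := isLUB_add_const (isLUB_pp hD g y) (pp g x)
    refine h4.2 ?_
    rintro _ ⟨_, ⟨t, ht, rfl⟩, rfl⟩
    show pp g x + y ⊓ t • g ≤ pp g (x + y)
    rw [add_comm]
    exact key t ht

lemma pp_smul {g x : E} (hg : 0 ≤ g) {r : ℝ} (hr : 0 ≤ r) :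
    pp g (r • x) = r • pp g x := by
  rcases hr.eq_or_lt with h | h
  · rw [← h, zero_smul, zero_smul, pp_zero hD g]
  · have hset : ppSet g (r • x) = (fun z => r • z) '' ppSet g x := by
      ext z
      constructor
      · rintro ⟨t, ht, rfl⟩
        refine ⟨x ⊓ (t / r) • g, ⟨t / r, div_nonneg ht h.le, rfl⟩, ?_⟩
        show r • (x ⊓ (t / r) • g) = r • x ⊓ t • g
        rw [smul_inf' r h.le, smul_smul]
        congr 2
        field_simp
      · rintro ⟨_, ⟨t, ht, rfl⟩, rfl⟩
        refine ⟨r * t, mul_nonneg h.le ht, ?_⟩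
        show r • (x ⊓ t • g) = r • x ⊓ (r * t) • g
        rw [smul_inf' r h.le, smul_smul]
    have h1 : IsLUB (ppSet g (r • x)) (r • pp g x) := by
      rw [hset]; exact isLUB_smul' (isLUB_pp hD g x) h
    exact (isLUB_pp hD g (r • x)).unique h1

lemma pp_idem {g x : E} (hx : 0 ≤ x) : pp g (pp g x) = pp g x := by
  refine le_antisymm (pp_le hD _ _) (pp_ub hD fun t ht => ?_)
  exact (le_inf (le_pp hD ht) inf_le_right).trans (le_pp hD ht)

lemma pp_self {g : E} (hg : 0 ≤ g) : pp g g = g := by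
  refine le_antisymm (pp_le hD _ _) ?_
  have h := le_pp hD (g := g) (x := g) zero_le_one
  rwa [one_smul, inf_idem] at h

lemma pp_disjoint {g h : E} (hg : 0 ≤ g) (hh : 0 ≤ h) (hd : h ⊓ g = 0) : pp g h = 0 :=
  le_antisymm (pp_ub hD fun t ht => (inf_smul_disjoint hg hh hd ht).le) (pp_nonneg hD hh)

omit hD in
noncomputable def bpFun (g x : E) : E := pp g (x ⊔ 0) - pp g ((-x) ⊔ 0)

lemma bpFun_eq {g : E} (hg : 0 ≤ g) {x a b : E} (ha : 0 ≤ a) (hb : 0 ≤ b)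
    (hx : x = a - b) : bpFun g x = pp g a - pp g b := by
  have h1 : (x ⊔ 0) + b = a + ((-x) ⊔ 0) := by
    have h2 : (x ⊔ 0) - ((-x) ⊔ 0) = a - b := by rw [posSub x, hx]
    exact sub_eq_sub_iff_add_eq_add.mp h2
  have h3 : pp g (x ⊔ 0) + pp g b = pp g a + pp g ((-x) ⊔ 0) := by
    rw [← pp_add hD hg le_sup_right hb, ← pp_add hD hg ha le_sup_right, h1]
  exact sub_eq_sub_iff_add_eq_add.mpr h3

noncomputable def bp {g : E} (hg : 0 ≤ g) : E →ₗ[ℝ] E where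
  toFun := bpFun g
  map_add' x y := by
    have hx : x + y = ((x ⊔ 0) + (y ⊔ 0)) - (((-x) ⊔ 0) + ((-y) ⊔ 0)) := by
      have e1 := posSub x
      have e2 := posSub y
      calc x + y = ((x ⊔ 0) - ((-x) ⊔ 0)) + ((y ⊔ 0) - ((-y) ⊔ 0)) := by rw [e1, e2]
        _ = ((x ⊔ 0) + (y ⊔ 0)) - (((-x) ⊔ 0) + ((-y) ⊔ 0)) := by abel
    rw [bpFun_eq hD hg (add_nonneg le_sup_right le_sup_right)
        (add_nonneg le_sup_right le_sup_right) hx,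
      pp_add hD hg le_sup_right le_sup_right, pp_add hD hg le_sup_right le_sup_right]
    show _ = bpFun g x + bpFun g y
    unfold bpFun
    abel
  map_smul' r x := by
    simp only [RingHom.id_apply]
    show bpFun g (r • x) = r • bpFun g x
    rcases le_or_gt 0 r with hr | hr
    · have e1 : (r • x) ⊔ 0 = r • (x ⊔ 0) := by rw [smul_sup' r hr, smul_zero]
      have e2 : (-(r • x)) ⊔ 0 = r • ((-x) ⊔ 0) := by
        rw [← smul_neg, smul_sup' r hr, smul_zero]
      unfold bpFun
      rw [e1, e2, pp_smul hD hg hr, pp_smul hD hg hr, ← smul_sub]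
    · have hs : (0 : ℝ) < -r := by linarith
      have e1 : (r • x) ⊔ 0 = (-r) • ((-x) ⊔ 0) := by
        rw [smul_sup' (-r) hs.le, smul_zero, smul_neg, neg_smul, neg_neg]
      have e2 : (-(r • x)) ⊔ 0 = (-r) • (x ⊔ 0) := by
        rw [smul_sup' (-r) hs.le, smul_zero, neg_smul]
      unfold bpFun
      rw [e1, e2, pp_smul hD hg hs.le, pp_smul hD hg hs.le, ← smul_sub, neg_smul,
        ← smul_neg, neg_sub]

lemma bp_apply {g : E} (hg : 0 ≤ g) (x : E) :
    bp hD hg x = pp g (x ⊔ 0) - pp g ((-x) ⊔ 0) := rfl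

lemma bp_of_nonneg {g : E} (hg : 0 ≤ g) {x : E} (hx : 0 ≤ x) : bp hD hg x = pp g x := by
  rw [bp_apply, sup_eq_left.mpr hx, sup_eq_right.mpr (neg_nonpos.mpr hx), pp_zero hD g, sub_zero]

lemma bp_isBandProjection {g : E} (hg : 0 ≤ g) : IsBandProjection (bp hD hg) := by
  constructor
  · intro f
    have hp : 0 ≤ pp g (f ⊔ 0) := pp_nonneg hD le_sup_right
    have hn : 0 ≤ pp g ((-f) ⊔ 0) := pp_nonneg hD le_sup_right
    show bpFun g (bp hD hg f) = bp hD hg f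
    rw [bpFun_eq hD hg hp hn (bp_apply hD hg f), pp_idem hD le_sup_right,
      pp_idem hD le_sup_right]
    exact (bp_apply hD hg f).symm
  · intro f hf
    rw [bp_of_nonneg hD hg hf]
    exact ⟨pp_nonneg hD hf, pp_le hD g f⟩

lemma bp_self {g : E} (hg : 0 ≤ g) : bp hD hg g = g := by
  rw [bp_of_nonneg hD hg hg, pp_self hD hg]

lemma bp_disjoint {g h : E} (hg : 0 ≤ g) (hh : 0 ≤ h) (hd : h ⊓ g = 0) :
    bp hD hg h = 0 := by
  rw [bp_of_nonneg hD hg hh, pp_disjoint hD hg hh hd]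

/-! ### Positivity and monotonicity of the operators -/

omit hD in
lemma sum_mono_range {u v : ℕ → E} (h : ∀ j, u j ≤ v j) (n : ℕ) :
    ∑ j ∈ Finset.range n, u j ≤ ∑ j ∈ Finset.range n, v j := by
  induction n with
  | zero => simp
  | succ n ih =>
    rw [Finset.sum_range_succ, Finset.sum_range_succ]
    exact add_le_add ih (h n)

omit hD in
lemma mono_of_pos (T : E →ₗ[ℝ] E) (h : ∀ x, 0 ≤ x → 0 ≤ T x) {a b : E} (hab : a ≤ b) :
    T a ≤ T b := by
  have h1 := h (b - a) (sub_nonneg.mpr hab)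
  rw [map_sub] at h1
  exact sub_nonneg.mp h1

omit hD in
lemma rieszHom_pos {S : E →ₗ[ℝ] E} (hS : IsRieszHom S) : ∀ x : E, 0 ≤ x → 0 ≤ S x := by
  intro x hx
  have h := hS x 0
  rw [map_zero, sup_eq_left.mpr hx] at h
  exact le_sup_right.trans h.ge

/-! ### The Freudenthal approximation argument on the order interval `[0, e]` -/

lemma TS_interval (T S : E →ₗ[ℝ] E) (e : E)
    (he : IsWeakOrderUnitIn (Set.univ : Set E) e)
    (hTpos : ∀ x : E, 0 ≤ x → 0 ≤ T x) (hTe : T e = e)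
    (hSpos : ∀ x : E, 0 ≤ x → 0 ≤ S x)
    (hbp : ∀ P : E →ₗ[ℝ] E, IsBandProjection P → T (S (P e)) = T (P e))
    {f : E} (hf0 : 0 ≤ f) (hfe : f ≤ e) : T (S f) = T f := by
  have he0 : (0 : E) ≤ e := he.1.le
  have key : ∀ m : ℕ, 0 < m →
      T (S f) - T f ≤ (m : ℝ)⁻¹ • e ∧ T f - T (S f) ≤ (m : ℝ)⁻¹ • e := by
    intro m hm
    have hm' : (0 : ℝ) < m := Nat.cast_pos.mpr hm
    set g : ℕ → E := fun i => (f - ((i : ℝ) / m) • e) ⊔ 0 with hgdef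
    have hg : ∀ i, 0 ≤ g i := fun i => le_sup_right
    set P : ℕ → (E →ₗ[ℝ] E) := fun i => bp hD (hg i) with hPdef
    set p : ℕ → E := fun i => P i e with hpdef
    have hTSp : ∀ i, T (S (p i)) = T (p i) := fun i => hbp (P i) (bp_isBandProjection hD (hg i))
    have hsplit : ∀ i : ℕ, f - ((i : ℝ) / m) • e = g i - ((((i : ℝ) / m) • e - f) ⊔ 0) := by
      intro i
      have h := posSub (f - ((i : ℝ) / m) • e)
      rw [neg_sub] at h
      exact h.symm
    have hdis : ∀ i : ℕ, ((((i : ℝ) / m) • e - f) ⊔ 0) ⊓ g i = 0 := by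
      intro i
      have h := pos_inf_neg (f - ((i : ℝ) / m) • e)
      rw [neg_sub] at h
      rw [hgdef]
      rw [inf_comm]
      exact h
    have hPsplit : ∀ i j : ℕ, P j (f - ((i : ℝ) / m) • e) = P j (g i) - P j ((((i : ℝ) / m) • e - f) ⊔ 0) := by
      intro i j
      rw [hsplit i, map_sub]
    have hPf : ∀ i : ℕ, P i f = g i + ((i : ℝ) / m) • p i := by
      intro i
      have h1 : P i (f - ((i : ℝ) / m) • e) = g i := by
        rw [hPsplit i i, hPdef]
        rw [bp_self hD (hg i), bp_disjoint hD (hg i) le_sup_right (hdis i), sub_zero]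
      have h2 : P i (f - ((i : ℝ) / m) • e) = P i f - ((i : ℝ) / m) • p i := by
        rw [map_sub, map_smul, hpdef]
      have h3 : P i f - ((i : ℝ) / m) • p i = g i := h2.symm.trans h1
      exact sub_eq_iff_eq_add.mp h3
    have hPpos : ∀ i : ℕ, ∀ x : E, 0 ≤ x → 0 ≤ P i x ∧ P i x ≤ x := by
      intro i
      have h := (bp_isBandProjection hD (hg i)).2
      rw [hPdef]
      exact h
    have hP0 : P 0 f = f := by
      have hg0 : g 0 = f := by
        rw [hgdef]
        show (f - (((0 : ℕ) : ℝ) / m) • e) ⊔ 0 = f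
        rw [Nat.cast_zero, zero_div, zero_smul, sub_zero]
        exact sup_eq_left.mpr hf0
      rw [hPf 0, hg0, Nat.cast_zero, zero_div, zero_smul, add_zero]
    have hPm : P m f = p m := by
      have hgm : g m = 0 := by
        rw [hgdef]
        show (f - ((m : ℝ) / m) • e) ⊔ 0 = 0
        rw [div_self hm'.ne', one_smul]
        exact sup_eq_right.mpr (sub_nonpos.mpr hfe)
      rw [hPf m, hgm, zero_add, div_self hm'.ne', one_smul]
    have upper : ∀ j : ℕ,
        P j f - P (j + 1) f ≤ (((j + 1 : ℕ) : ℝ) / m) • (p j - p (j + 1)) := by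
      intro j
      set c : ℝ := ((j + 1 : ℕ) : ℝ) / m with hc
      have h1 : P j f - c • p j ≤ g (j + 1) := by
        have e1 : P j (f - c • e) = P j f - c • p j := by rw [map_sub, map_smul, hpdef]
        calc P j f - c • p j = P j (g (j + 1)) - P j (((c • e - f) ⊔ 0)) := by
              rw [← e1, hPsplit (j + 1) j]
          _ ≤ P j (g (j + 1)) := sub_le_self _ (hPpos j _ le_sup_right).1
          _ ≤ g (j + 1) := (hPpos j _ (hg (j + 1))).2
      have h3 : P (j + 1) f - c • p (j + 1) = g (j + 1) := by
        rw [hPf (j + 1)]; rw [add_sub_cancel_right]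
      have h4 : P j f - c • p j ≤ P (j + 1) f - c • p (j + 1) := h1.trans_eq h3.symm
      have h5 := sub_le_sub_iff.mp h4
      rw [smul_sub]
      refine sub_le_sub_iff.mpr ?_
      exact h5.trans_eq (add_comm _ _)
    have lower : ∀ j : ℕ,
        (((j : ℕ) : ℝ) / m) • (p j - p (j + 1)) ≤ P j f - P (j + 1) f := by
      intro j
      set c : ℝ := ((j : ℕ) : ℝ) / m with hc
      have h1 : P (j + 1) f - c • p (j + 1) ≤ g j := by
        have e1 : P (j + 1) (f - c • e) = P (j + 1) f - c • p (j + 1) := by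
          rw [map_sub, map_smul, hpdef]
        calc P (j + 1) f - c • p (j + 1)
            = P (j + 1) (g j) - P (j + 1) (((c • e - f) ⊔ 0)) := by
              rw [← e1, hPsplit j (j + 1)]
          _ ≤ P (j + 1) (g j) := sub_le_self _ (hPpos (j + 1) _ le_sup_right).1
          _ ≤ g j := (hPpos (j + 1) _ (hg j)).2
      have h3 : P j f - c • p j = g j := by
        rw [hPf j]; rw [add_sub_cancel_right]
      have h4 : P (j + 1) f - c • p (j + 1) ≤ P j f - c • p j := h1.trans_eq h3.symm
      have h5 := sub_le_sub_iff.mp h4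
      rw [smul_sub]
      refine sub_le_sub_iff.mpr ?_
      exact (add_comm (c • p j) (P (j + 1) f)) ▸ h5
    have telef : p m + ∑ j ∈ Finset.range m, (P j f - P (j + 1) f) = f := by
      rw [Finset.sum_range_sub' (fun j => P j f) m, hP0, ← hPm]
      abel
    set u : E := p m + ∑ j ∈ Finset.range m, (((j + 1 : ℕ) : ℝ) / m) • (p j - p (j + 1)) with hu
    set l : E := p m + ∑ j ∈ Finset.range m, (((j : ℕ) : ℝ) / m) • (p j - p (j + 1)) with hl
    have hfu : f ≤ u := by
      rw [← telef, hu]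
      exact add_le_add_right (sum_mono_range upper m) _
    have hlf : l ≤ f := by
      rw [← telef, hl]
      exact add_le_add_right (sum_mono_range lower m) _
    have hul : u - l ≤ (m : ℝ)⁻¹ • e := by
      have h1 : u - l = ∑ j ∈ Finset.range m, (m : ℝ)⁻¹ • (p j - p (j + 1)) := by
        rw [hu, hl, add_sub_add_left_eq_sub, ← Finset.sum_sub_distrib]
        refine Finset.sum_congr rfl fun j _ => ?_
        rw [← sub_smul]
        congr 1
        push_cast
        rw [div_sub_div_same, add_sub_cancel_left, one_div]
      have h2 : u - l = (m : ℝ)⁻¹ • (p 0 - p m) := by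
        rw [h1, ← Finset.smul_sum, Finset.sum_range_sub' (fun j => p j) m]
      rw [h2]
      refine smul_le_smul_of_nonneg_left ?_ (inv_nonneg.mpr hm'.le)
      have b1 : p 0 ≤ e := (hPpos 0 e he0).2
      have b2 : 0 ≤ p m := (hPpos m e he0).1
      calc p 0 - p m ≤ e - 0 := sub_le_sub b1 b2
        _ = e := sub_zero e
    have hTSu : T (S u) = T u := by
      rw [hu]
      simp only [map_add, map_sum, map_smul, map_sub, hTSp]
    have hTSl : T (S l) = T l := by
      rw [hl]
      simp only [map_add, map_sum, map_smul, map_sub, hTSp]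
    have hTmono : ∀ {a b : E}, a ≤ b → T a ≤ T b := fun {a b} h => mono_of_pos T hTpos h
    have hSmono : ∀ {a b : E}, a ≤ b → S a ≤ S b := fun {a b} h => mono_of_pos S hSpos h
    have s1 : T (S f) ≤ T u := (hTmono (hSmono hfu)).trans_eq hTSu
    have s2 : T l ≤ T (S f) := hTSl.symm.trans_le (hTmono (hSmono hlf))
    have s3 : T f ≤ T u := hTmono hfu
    have s4 : T l ≤ T f := hTmono hlf
    have s5 : T u - T l ≤ (m : ℝ)⁻¹ • e := by
      rw [← map_sub]
      calc T (u - l) ≤ T ((m : ℝ)⁻¹ • e) := hTmono hul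
        _ = (m : ℝ)⁻¹ • T e := map_smul T _ e
        _ = (m : ℝ)⁻¹ • e := by rw [hTe]
    exact ⟨(sub_le_sub s1 s4).trans s5, (sub_le_sub s3 s2).trans s5⟩
  have harch : ∀ d : E, (∀ m : ℕ, 0 < m → d ≤ (m : ℝ)⁻¹ • e) → d ≤ 0 := by
    intro d hd
    refine arch hD (y := e) fun n => ?_
    cases n with
    | zero => simpa using he0
    | succ n =>
      have h1 := hd (n + 1) (Nat.succ_pos n)
      have h2 := smul_le_smul_of_nonneg_left h1 (by positivity : (0 : ℝ) ≤ ((n + 1 : ℕ) : ℝ))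
      have h3 : ((n + 1 : ℕ) : ℝ) ≠ 0 := by positivity
      rwa [smul_inv_smul₀ h3] at h2
  have d1 : T (S f) - T f ≤ 0 := harch _ fun m hm => (key m hm).1
  have d2 : T f - T (S f) ≤ 0 := harch _ fun m hm => (key m hm).2
  exact le_antisymm (sub_nonpos.mp d1) (sub_nonpos.mp d2)

lemma TS_bounded (T S : E →ₗ[ℝ] E) (e : E)
    (he : IsWeakOrderUnitIn (Set.univ : Set E) e)
    (hTpos : ∀ x : E, 0 ≤ x → 0 ≤ T x) (hTe : T e = e)
    (hSpos : ∀ x : E, 0 ≤ x → 0 ≤ S x)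
    (hbp : ∀ P : E →ₗ[ℝ] E, IsBandProjection P → T (S (P e)) = T (P e))
    {f : E} {k : ℝ} (hf0 : 0 ≤ f) (hfk : f ≤ k • e) : T (S f) = T f := by
  have he0 : (0 : E) ≤ e := he.1.le
  rcases le_or_gt k 0 with hk | hk
  · have h1 : k • e ≤ 0 := by
      have := smul_mono_scalar hk he0
      rwa [zero_smul] at this
    have hf : f = 0 := le_antisymm (hfk.trans h1) hf0
    rw [hf, map_zero, map_zero]
  · have h1 : 0 ≤ k⁻¹ • f := smul_nonneg (inv_nonneg.mpr hk.le) hf0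
    have h2 : k⁻¹ • f ≤ e := by
      have h3 := smul_le_smul_of_nonneg_left hfk (inv_nonneg.mpr hk.le)
      rwa [inv_smul_smul₀ hk.ne'] at h3
    have h3 := TS_interval hD T S e he hTpos hTe hSpos hbp h1 h2
    rw [map_smul, map_smul, map_smul] at h3
    calc T (S f) = k • (k⁻¹ • T (S f)) := (smul_inv_smul₀ hk.ne' _).symm
      _ = k • (k⁻¹ • T f) := by rw [h3]
      _ = T f := smul_inv_smul₀ hk.ne' _

lemma glb_tail (he : IsWeakOrderUnitIn (Set.univ : Set E) e)
    {f : E} (hf0 : 0 ≤ f) :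
    IsGLB (Set.range fun n : ℕ => f - f ⊓ (n : ℝ) • e) 0 := by
  have he0 : (0 : E) ≤ e := he.1.le
  constructor
  · rintro _ ⟨n, rfl⟩
    exact sub_nonneg.mpr inf_le_left
  · intro b hb
    set c := b ⊔ 0 with hcdef
    have hc0 : (0 : E) ≤ c := le_sup_right
    have hcb : ∀ n : ℕ, c ≤ (f - (n : ℝ) • e) ⊔ 0 := by
      intro n
      have h1 : b ≤ f - f ⊓ (n : ℝ) • e := hb ⟨n, rfl⟩
      have h2 : f - f ⊓ (n : ℝ) • e = (f - (n : ℝ) • e) ⊔ 0 := by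
        rw [sub_inf, sub_self, sup_comm]
      exact sup_le (h1.trans_eq h2) le_sup_right
    have step : ∀ n : ℕ, (n : ℝ) • (c ⊓ e) ≤ f ⊓ ((n : ℝ) • e) := by
      intro n
      induction n with
      | zero => simp [inf_eq_right.mpr hf0]
      | succ n ih =>
        have e1 : ((n + 1 : ℕ) : ℝ) • e = (n : ℝ) • e + e := by
          push_cast; rw [add_smul, one_smul]
        have e2 : ((n + 1 : ℕ) : ℝ) • (c ⊓ e) = (n : ℝ) • (c ⊓ e) + c ⊓ e := by
          push_cast; rw [add_smul, one_smul]
        have key := inf_add_decomp f ((n : ℝ) • e) e he0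
        rw [e1, e2, key]
        refine add_le_add ih (le_inf (inf_le_left.trans (hcb n)) inf_le_right)
    have harch : c ⊓ e ≤ 0 := arch hD fun n => (step n).trans inf_le_left
    have hc'0 : c ⊓ e = 0 := le_antisymm harch (le_inf hc0 he0)
    have hcz : c = 0 := he.2 c (Set.mem_univ c) hc0 hc'0
    calc b ≤ c := le_sup_left
      _ = 0 := hcz

omit hD in
lemma isGLBIn_univ_of_isGLB {A : Set E} {l : E} (h : IsGLB A l) :
    IsGLBIn Set.univ A l :=
  ⟨fun a ha => h.1 ha, fun b _ hb => h.2 fun a ha => hb a ha⟩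

lemma main_forward (T S : E →ₗ[ℝ] E) (e : E)
    (he : IsWeakOrderUnitIn (Set.univ : Set E) e)
    (hT : IsCondExpOn Set.univ T) (hTe : T e = e)
    (hS : IsRieszHom S) (hSoc : OrderContinuousOp S)
    (hbp : ∀ P : E →ₗ[ℝ] E, IsBandProjection P → T (S (P e)) = T (P e)) :
    ∀ f : E, T (S f) = T f := by
  have he0 : (0 : E) ≤ e := he.1.le
  have hTpos : ∀ x : E, 0 ≤ x → 0 ≤ T x := fun x hx => hT.2.2.2.1 x (Set.mem_univ x) hx
  have hToc := hT.2.2.2.2.1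
  have hSpos := rieszHom_pos hS
  have hTmono : ∀ {a b : E}, a ≤ b → T a ≤ T b := fun {a b} h => mono_of_pos T hTpos h
  have hSmono : ∀ {a b : E}, a ≤ b → S a ≤ S b := fun {a b} h => mono_of_pos S hSpos h
  have main_pos : ∀ f : E, 0 ≤ f → T (S f) = T f := by
    intro f hf0
    set a : ℕ → E := fun n => f ⊓ (n : ℝ) • e with ha
    have hTSa : ∀ n, T (S (a n)) = T (a n) := fun n =>
      TS_bounded hD T S e he hTpos hTe hSpos hbp
        (le_inf hf0 (smul_nonneg (Nat.cast_nonneg n : (0:ℝ) ≤ (n:ℝ)) he0)) inf_le_right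
    set A : Set E := Set.range (fun n : ℕ => f - a n) with hA
    have hAne : A.Nonempty := ⟨_, ⟨0, rfl⟩⟩
    have hamono : ∀ n k : ℕ, n ≤ k → a n ≤ a k := fun n k h =>
      inf_le_inf_left f (smul_mono_scalar (by exact_mod_cast h) he0)
    have hdir : DirectedOn (· ≥ ·) A := by
      rintro _ ⟨n, rfl⟩ _ ⟨k, rfl⟩
      exact ⟨f - a (max n k), ⟨max n k, rfl⟩,
        sub_le_sub_left (hamono _ _ (le_max_left n k)) f,
        sub_le_sub_left (hamono _ _ (le_max_right n k)) f⟩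
    have hglb : IsGLB A 0 := glb_tail hD he hf0
    have hSA : IsGLB (S '' A) 0 := hSoc A hAne hdir hglb
    have hSne : (S '' A).Nonempty := hAne.image S
    have hSdir : DirectedOn (· ≥ ·) (S '' A) := by
      rintro _ ⟨x, hx, rfl⟩ _ ⟨y, hy, rfl⟩
      obtain ⟨z, hz, hzx, hzy⟩ := hdir x hx y hy
      exact ⟨S z, Set.mem_image_of_mem _ hz, hSmono hzx, hSmono hzy⟩
    have hT1 : IsGLBIn Set.univ (T '' (S '' A)) 0 :=
      hToc (S '' A) (S '' A).subset_univ hSne hSdir (isGLBIn_univ_of_isGLB hSA)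
    have hT2 : IsGLBIn Set.univ (T '' A) 0 :=
      hToc A A.subset_univ hAne hdir (isGLBIn_univ_of_isGLB hglb)
    have hTA0 : ∀ n : ℕ, T (a n) ≤ T f := by
      intro n
      have h := hT2.1 _ (Set.mem_image_of_mem T ⟨n, rfl⟩)
      rw [map_sub] at h
      exact sub_nonneg.mp h
    have hd1 : T (S f) - T f ≤ 0 := by
      refine hT1.2 _ (Set.mem_univ _) ?_
      rintro _ ⟨_, ⟨_, ⟨n, rfl⟩, rfl⟩, rfl⟩
      show T (S f) - T f ≤ T (S (f - a n))
      rw [map_sub, map_sub, hTSa n]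
      exact sub_le_sub_left (hTA0 n) _
    have hd2 : T f - T (S f) ≤ 0 := by
      refine hT2.2 _ (Set.mem_univ _) ?_
      rintro _ ⟨_, ⟨n, rfl⟩, rfl⟩
      show T f - T (S f) ≤ T (f - a n)
      rw [map_sub]
      have h5 : T (a n) ≤ T (S f) := by
        rw [← hTSa n]
        exact hTmono (hSmono inf_le_left)
      exact sub_le_sub_left h5 _
    exact le_antisymm (sub_nonpos.mp hd1) (sub_nonpos.mp hd2)
  intro f
  have h1 : T (S f) = T (S (f ⊔ 0)) - T (S ((-f) ⊔ 0)) := by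
    conv_lhs => rw [← posSub f]
    rw [map_sub, map_sub]
  have h2 : T f = T (f ⊔ 0) - T ((-f) ⊔ 0) := by
    conv_lhs => rw [← posSub f]
    rw [map_sub]
  rw [h1, h2, main_pos (f ⊔ 0) le_sup_right, main_pos ((-f) ⊔ 0) le_sup_right]

end CEPSAux


/-- The condition `TSPe = TPe` for all band projections `P` is equivalent to `TSf = Tf`
for all `f ∈ E` (via Freudenthal's spectral theorem). -/
theorem TS_eq_T_iff_bandProjections (T S : E →ₗ[ℝ] E) (e : E)
    (hD : DedekindCompleteIn (Set.univ : Set E))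
    (he : IsWeakOrderUnitIn (Set.univ : Set E) e)
    (hT : IsCondExpOn Set.univ T) (hTe : T e = e)
    (hS : IsRieszHom S) (hSoc : OrderContinuousOp S) (hSe : S e = e) :
    (∀ P : E →ₗ[ℝ] E, IsBandProjection P → T (S (P e)) = T (P e)) ↔
      ∀ f : E, T (S f) = T f := by
  constructor
  · intro hbp f
    exact CEPSAux.main_forward hD T S e he hT hTe hS hSoc hbp f
  · intro h P hP
    exact h (P e)
end

section
/- Let (E,T,S,e) be a conditional expectation preserving system with E = 𝓔_S. Then 𝓘_S = R(L_S), i.e., the S-invariant elements of E are exactly the elements of the range of L_S. -/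
open Finset

/- `E` is a Riesz space (real vector lattice). -/
variable {E : Type*} [AddCommGroup E] [Lattice E]
  [CovariantClass E E (· + ·) (· ≤ ·)] [Module ℝ E] [PosSMulMono ℝ E]

/-- Archimedean property from Dedekind completeness. -/
lemma arch_aux (hdc : DedekindCompleteIn (Set.univ : Set E)) {d b : E} (hd : 0 ≤ d)
    (hb : ∀ n : ℕ, b ≤ ((n : ℝ) + 1)⁻¹ • d) : b ≤ 0 := by
  have key : ∀ n : ℕ, (n : ℝ) • b ≤ d := by
    intro n
    cases n with
    | zero => simpa using hd
    | succ m =>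
      have h2 : ((m:ℝ)+1) • b ≤ ((m:ℝ)+1) • (((m:ℝ)+1)⁻¹ • d) :=
        smul_le_smul_of_nonneg_left (hb m) (by positivity)
      rw [smul_smul, mul_inv_cancel₀ (by positivity), one_smul] at h2
      calc ((m+1 : ℕ) : ℝ) • b = ((m:ℝ)+1) • b := by push_cast; ring_nf
        _ ≤ d := h2
  obtain ⟨s, -, hub, hlub⟩ := hdc (Set.range fun n : ℕ => (n : ℝ) • b)
    (by simp) (Set.range_nonempty _) ⟨d, trivial, by rintro a ⟨n, rfl⟩; exact key n⟩
  have hsb : s ≤ s - b := by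
    refine hlub _ trivial ?_
    rintro a ⟨n, rfl⟩
    have h1 : ((n + 1 : ℕ) : ℝ) • b ≤ s := hub _ ⟨n + 1, rfl⟩
    have h2 : ((n + 1 : ℕ) : ℝ) • b = (n : ℝ) • b + b := by push_cast; rw [add_smul, one_smul]
    rw [h2] at h1
    show (n : ℝ) • b ≤ s - b
    exact le_sub_iff_add_le.mpr h1
  have := le_sub_iff_add_le.mp hsb
  exact (add_le_iff_nonpos_right _).mp this

lemma glb_pair {p q : ℕ → E} (hp : Antitone p) (hq : Antitone q)
    (hp0 : ∀ b ∈ lowerBounds (Set.range p), b ≤ 0)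
    (hq0 : ∀ b ∈ lowerBounds (Set.range q), b ≤ 0)
    {x : E} (hx : ∀ n, x ≤ p n + q n) : x ≤ 0 := by
  have h1 : ∀ m, x ≤ q m := by
    intro m
    have hlb : x - q m ∈ lowerBounds (Set.range p) := by
      rintro a ⟨n, rfl⟩
      rcases le_total n m with hnm | hnm
      · exact sub_le_iff_le_add.mpr ((hx m).trans (add_le_add_left (hp hnm) _))
      · exact sub_le_iff_le_add.mpr ((hx n).trans (add_le_add_right (hq hnm) _))
    have := hp0 _ hlb
    exact le_of_sub_nonpos this
  exact hq0 _ (by rintro a ⟨n, rfl⟩; exact h1 n)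

lemma glb_tail {p : ℕ → E} (hp : Antitone p) (hp0 : IsGLB (Set.range p) 0) :
    IsGLB (Set.range fun n => p (n+1)) 0 := by
  constructor
  · rintro a ⟨n, rfl⟩; exact hp0.1 ⟨n+1, rfl⟩
  · intro b hb
    refine hp0.2 ?_
    rintro a ⟨n, rfl⟩
    exact (hb ⟨n, rfl⟩).trans (hp (Nat.le_succ n))

lemma sum_ces (S : E →ₗ[ℝ] E) (f : E) (n : ℕ) :
    (n : ℝ) • ces S f n = ∑ k ∈ Finset.range n, (S ^ k) f := by
  cases n with
  | zero => simp [ces]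
  | succ m =>
    rw [ces, smul_smul, mul_inv_cancel₀ (by exact_mod_cast Nat.succ_ne_zero m), one_smul]

/-- Any order limit of Cesàro means is S-invariant. -/
lemma S_fix (hdc : DedekindCompleteIn (Set.univ : Set E)) {S : E →ₗ[ℝ] E}
    (hS : IsRieszHom S) (hSc : OrderContinuousOp S) {f g : E}
    (hconv : OrderConv (ces S f) g) : S g = g := by
  obtain ⟨p, hpa, hp0, hpb⟩ := hconv
  have hp_nonneg : ∀ n, (0:E) ≤ p n := fun n => hp0.1 ⟨n, rfl⟩
  -- S is positive and monotone
  have hSpos : ∀ x : E, 0 ≤ x → 0 ≤ S x := by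
    intro x hx
    have h1 : x ⊔ 0 = x := sup_eq_left.mpr hx
    have h2 : S x ⊔ 0 = S x := by
      conv_lhs => rw [← map_zero S, ← hS, h1]
    exact sup_eq_left.mp h2
  have hSmono : ∀ a b : E, a ≤ b → S a ≤ S b := by
    intro a b hab
    have := hSpos (b - a) (sub_nonneg.mpr hab)
    rw [map_sub] at this
    exact sub_nonneg.mp this
  have hSabs : ∀ x : E, |S x| = S |x| := by
    intro x
    have : |x| = x ⊔ -x := rfl
    rw [this, hS, map_neg]
    rfl
  -- |r • x| ≤ r • |x| for r ≥ 0
  have habs_smul : ∀ (r : ℝ) (x : E), 0 ≤ r → |r • x| ≤ r • |x| := by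
    intro r x hr
    refine abs_le'.mpr ⟨smul_le_smul_of_nonneg_left (le_abs_self x) hr, ?_⟩
    rw [← smul_neg]
    exact smul_le_smul_of_nonneg_left (neg_le_abs x) hr
  set c := ces S f with hc
  -- S (c (n+1)) in terms of c (n+2)
  have hSces : ∀ n : ℕ, S (c (n+1)) = ((n:ℝ)+1)⁻¹ • ((((n:ℝ)+1)+1) • c (n+2) - f) := by
    intro n
    have h1 : S (c (n+1)) = (((n+1:ℕ)):ℝ)⁻¹ • S (∑ k ∈ Finset.range (n+1), (S ^ k) f) := by
      rw [hc, ces, map_smul]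
    have h2 : S (∑ k ∈ Finset.range (n+1), (S ^ k) f)
        = ∑ k ∈ Finset.range (n+1), (S ^ (k+1)) f := by
      rw [map_sum]
      refine Finset.sum_congr rfl fun k _ => ?_
      rw [pow_succ']
      rfl
    have h3 : ∑ k ∈ Finset.range (n+1), (S ^ (k+1)) f
        = ∑ k ∈ Finset.range (n+2), (S ^ k) f - f := by
      rw [Finset.sum_range_succ' (fun k => (S ^ k) f) (n+1)]
      simp
    rw [h1, h2, h3, ← sum_ces S f (n+2)]
    push_cast
    ring_nf
    rfl
  -- the key identity
  have hiden : ∀ n : ℕ, S g - g = S (g - c (n+1)) + (c (n+2) - g)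
      + ((n:ℝ)+1)⁻¹ • (c (n+2) - g) + ((n:ℝ)+1)⁻¹ • (g - f) := by
    intro n
    rw [map_sub, hSces n]
    match_scalars <;> field_simp <;> ring
  set d : E := p 0 + |g - f| with hd
  have hd_nonneg : 0 ≤ d := add_nonneg (hp_nonneg 0) (abs_nonneg _)
  -- the bound
  have hbound : ∀ n : ℕ, |S g - g| ≤ (S (p (n+1)) + p (n+1)) + ((n:ℝ)+1)⁻¹ • d := by
    intro n
    rw [hiden n]
    have hinv : (0:ℝ) ≤ ((n:ℝ)+1)⁻¹ := by positivity
    have e1 : |S (g - c (n+1))| ≤ S (p (n+1)) := by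
      rw [hSabs]
      exact hSmono _ _ (by rw [abs_sub_comm]; exact hpb (n+1))
    have e2 : |c (n+2) - g| ≤ p (n+1) := (hpb (n+2)).trans (hpa (Nat.le_succ (n+1)))
    have e3 : |((n:ℝ)+1)⁻¹ • (c (n+2) - g)| ≤ ((n:ℝ)+1)⁻¹ • p 0 := by
      refine (habs_smul _ _ hinv).trans (smul_le_smul_of_nonneg_left ?_ hinv)
      exact (hpb (n+2)).trans (hpa (Nat.zero_le (n+2)))
    have e4 : |((n:ℝ)+1)⁻¹ • (g - f)| ≤ ((n:ℝ)+1)⁻¹ • |g - f| := habs_smul _ _ hinv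
    calc |S (g - c (n+1)) + (c (n+2) - g) + ((n:ℝ)+1)⁻¹ • (c (n+2) - g)
          + ((n:ℝ)+1)⁻¹ • (g - f)|
        ≤ |S (g - c (n+1)) + (c (n+2) - g) + ((n:ℝ)+1)⁻¹ • (c (n+2) - g)|
          + |((n:ℝ)+1)⁻¹ • (g - f)| := abs_add_le _ _
      _ ≤ (|S (g - c (n+1)) + (c (n+2) - g)| + |((n:ℝ)+1)⁻¹ • (c (n+2) - g)|)
          + |((n:ℝ)+1)⁻¹ • (g - f)| := add_le_add_left (abs_add_le _ _) _
      _ ≤ ((|S (g - c (n+1))| + |c (n+2) - g|) + |((n:ℝ)+1)⁻¹ • (c (n+2) - g)|)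
          + |((n:ℝ)+1)⁻¹ • (g - f)| :=
            add_le_add_left (add_le_add_left (abs_add_le _ _) _) _
      _ ≤ ((S (p (n+1)) + p (n+1)) + ((n:ℝ)+1)⁻¹ • p 0) + ((n:ℝ)+1)⁻¹ • |g - f| :=
            add_le_add (add_le_add (add_le_add e1 e2) e3) e4
      _ = (S (p (n+1)) + p (n+1)) + ((n:ℝ)+1)⁻¹ • d := by rw [hd, smul_add]; abel
  -- infimum arguments
  have hptail_a : Antitone (fun n : ℕ => p (n+1)) := fun m n hmn => hpa (by omega)
  have hptail_0 : IsGLB (Set.range fun n : ℕ => p (n+1)) 0 := glb_tail hpa hp0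
  have hSp_a : Antitone (fun n : ℕ => S (p (n+1))) := fun m n hmn => hSmono _ _ (hptail_a hmn)
  have hSp_0 : ∀ b ∈ lowerBounds (Set.range fun n : ℕ => S (p (n+1))), b ≤ 0 := by
    have hdir : DirectedOn (· ≥ ·) (Set.range fun n : ℕ => p (n+1)) := by
      rintro a ⟨m, rfl⟩ b ⟨n, rfl⟩
      exact ⟨p (max m n + 1), ⟨max m n, rfl⟩, hptail_a (Nat.le_max_left m n),
        hptail_a (Nat.le_max_right m n)⟩
    have := hSc _ (Set.range_nonempty _) hdir hptail_0
    have him : S '' (Set.range fun n : ℕ => p (n+1)) = Set.range fun n : ℕ => S (p (n+1)) := by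
      rw [← Set.range_comp]; rfl
    rw [him] at this
    exact fun b hb => this.2 hb
  have hrate_a : Antitone (fun n : ℕ => ((n:ℝ)+1)⁻¹ • d) := by
    intro m n hmn
    rw [← sub_nonneg, ← sub_smul]
    refine smul_nonneg ?_ hd_nonneg
    rw [sub_nonneg]
    apply inv_anti₀ (by positivity)
    exact_mod_cast add_le_add_left (Nat.cast_le.mpr hmn) 1
  have hrate_0 : ∀ b ∈ lowerBounds (Set.range fun n : ℕ => ((n:ℝ)+1)⁻¹ • d), b ≤ 0 := by
    intro b hb
    exact arch_aux hdc hd_nonneg fun n => hb ⟨n, rfl⟩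
  have hsum_a : Antitone (fun n : ℕ => S (p (n+1)) + p (n+1)) :=
    fun m n hmn => add_le_add (hSp_a hmn) (hptail_a hmn)
  have hsum_0 : ∀ b ∈ lowerBounds (Set.range fun n : ℕ => S (p (n+1)) + p (n+1)), b ≤ 0 := by
    intro b hb
    exact glb_pair hSp_a hptail_a hSp_0
      (fun b' hb' => hptail_0.2 (by rintro a ⟨n, rfl⟩; exact hb' ⟨n, rfl⟩)) fun n => hb ⟨n, rfl⟩
  have hfinal : |S g - g| ≤ 0 :=
    glb_pair hsum_a hrate_a hsum_0 hrate_0 hbound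
  have : S g - g = 0 :=
    le_antisymm ((le_abs_self _).trans hfinal) (neg_nonpos.mp ((neg_le_abs _).trans hfinal))
  exact sub_eq_zero.mp this


/-- With `E = 𝓔_S` (so that `L_S` is everywhere defined), `𝓘_S = R(L_S)`. -/
theorem invariants_eq_range_LS (T S : E →ₗ[ℝ] E) (e : E) (h : IsCEPS T S e)
    (L : E → E) (hL : ∀ f, OrderConv (ces S f) (L f)) :
    {f : E | S f = f} = Set.range L := by
  obtain ⟨hdc, -, -, -, hS, hSc, -, -⟩ := h
  ext f
  simp only [Set.mem_setOf_eq, Set.mem_range]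
  constructor
  · intro hf
    refine ⟨f, ?_⟩
    -- ces S f (n+1) = f
    have hpow : ∀ k : ℕ, (S ^ k) f = f := by
      intro k
      induction k with
      | zero => rfl
      | succ m ih =>
        rw [pow_succ']
        show S ((S ^ m) f) = f
        rw [ih, hf]
    have hces : ∀ n : ℕ, ces S f (n+1) = f := by
      intro n
      rw [ces]
      have : ∑ k ∈ Finset.range (n+1), (S ^ k) f = ((n+1 : ℕ) : ℝ) • f := by
        rw [Nat.cast_smul_eq_nsmul]
        simp [hpow]
      rw [this, smul_smul, inv_mul_cancel₀ (by exact_mod_cast Nat.succ_ne_zero n), one_smul]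
    obtain ⟨p, hpa, hp0, hpb⟩ := hL f
    have hlb : |L f - f| ∈ lowerBounds (Set.range p) := by
      rintro a ⟨n, rfl⟩
      have := hpb (n+1)
      rw [hces n, abs_sub_comm] at this
      exact this.trans (hpa (Nat.le_succ n))
    have : |L f - f| ≤ 0 := hp0.2 hlb
    have h0 : L f - f = 0 :=
      le_antisymm ((le_abs_self _).trans this) (neg_nonpos.mp ((neg_le_abs _).trans this))
    exact sub_eq_zero.mp h0
  · rintro ⟨y, rfl⟩
    exact S_fix hdc hS hSc (hL y)
end

section
/- Let (E,T,S,e) be a conditional expectation preserving system with E = 𝓔_S. Then (E,T,S,e) is ergodic if and only if T = L_S. -/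
open Finset

/- `E` is a Riesz space (real vector lattice). -/
variable {E : Type*} [AddCommGroup E] [Lattice E]
  [CovariantClass E E (· + ·) (· ≤ ·)] [Module ℝ E] [PosSMulMono ℝ E]

set_option linter.unusedSectionVars false
set_option linter.unusedVariables false
namespace Erg

lemma smul_le_smul_right'' {r s : ℝ} {x : E} (h : r ≤ s) (hx : 0 ≤ x) : r • x ≤ s • x := by
  have h0 : 0 ≤ (s - r) • x := smul_nonneg (by linarith) hx
  rw [sub_smul] at h0
  exact sub_nonneg.mp h0

lemma smul_inf_nn {r : ℝ} (hr : 0 ≤ r) (a b : E) : r • (a ⊓ b) = r • a ⊓ r • b := by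
  rcases eq_or_lt_of_le hr with h | h
  · simp [← h]
  · apply le_antisymm
    · exact le_inf (smul_le_smul_of_nonneg_left inf_le_left hr)
        (smul_le_smul_of_nonneg_left inf_le_right hr)
    · have h2 : r⁻¹ • (r • a ⊓ r • b) ≤ a ⊓ b := by
        refine le_inf ?_ ?_
        · have := smul_le_smul_of_nonneg_left (inf_le_left (a := r • a) (b := r • b))
            (inv_nonneg.mpr hr)
          rwa [inv_smul_smul₀ h.ne'] at this
        · have := smul_le_smul_of_nonneg_left (inf_le_right (a := r • a) (b := r • b))
            (inv_nonneg.mpr hr)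
          rwa [inv_smul_smul₀ h.ne'] at this
      have := smul_le_smul_of_nonneg_left h2 hr
      rwa [smul_inv_smul₀ h.ne'] at this

lemma smul_sup_nn {r : ℝ} (hr : 0 ≤ r) (a b : E) : r • (a ⊔ b) = r • a ⊔ r • b := by
  rcases eq_or_lt_of_le hr with h | h
  · simp [← h]
  · apply le_antisymm
    · have h2 : r⁻¹ • (r • a ⊔ r • b) ≤ r⁻¹ • (r • a) ⊔ r⁻¹ • (r • b) → True := fun _ => trivial
      -- direct: r • (a ⊔ b) ≤ x ↔ a ⊔ b ≤ r⁻¹ x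
      have h3 : a ⊔ b ≤ r⁻¹ • (r • a ⊔ r • b) := by
        refine sup_le ?_ ?_
        · have := smul_le_smul_of_nonneg_left (le_sup_left (a := r • a) (b := r • b))
            (inv_nonneg.mpr hr)
          rwa [inv_smul_smul₀ h.ne'] at this
        · have := smul_le_smul_of_nonneg_left (le_sup_right (a := r • a) (b := r • b))
            (inv_nonneg.mpr hr)
          rwa [inv_smul_smul₀ h.ne'] at this
      have := smul_le_smul_of_nonneg_left h3 hr
      rwa [smul_inv_smul₀ h.ne'] at this
    · exact sup_le (smul_le_smul_of_nonneg_left le_sup_left hr)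
        (smul_le_smul_of_nonneg_left le_sup_right hr)

lemma posPart_smul_nn {r : ℝ} (hr : 0 ≤ r) (x : E) : (r • x)⁺ = r • x⁺ := by
  rw [posPart_def, posPart_def, smul_sup_nn hr, smul_zero]

lemma negPart_smul_nn {r : ℝ} (hr : 0 ≤ r) (x : E) : (r • x)⁻ = r • x⁻ := by
  rw [negPart_def, negPart_def, smul_sup_nn hr, smul_zero, smul_neg]

lemma abs_smul_nn {r : ℝ} (hr : 0 ≤ r) (x : E) : |r • x| = r • |x| := by
  rw [← posPart_add_negPart (r • x), ← posPart_add_negPart x, posPart_smul_nn hr,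
    negPart_smul_nn hr, smul_add]

lemma posPart_add_le' (a b : E) : (a + b)⁺ ≤ a⁺ + b⁺ := by
  rw [posPart_def]
  exact sup_le (add_le_add (le_posPart a) (le_posPart b))
    (add_nonneg (posPart_nonneg a) (posPart_nonneg b))

lemma inf_add_le' {x y c : E} (hx : 0 ≤ x) (hy : 0 ≤ y) (hc : 0 ≤ c) :
    (x + y) ⊓ c ≤ x ⊓ c + y ⊓ c := by
  rw [← sub_le_iff_le_add']
  have h1 : (x + y) ⊓ c - x ⊓ c = ((x + y) ⊓ c - x) ⊔ ((x + y) ⊓ c - c) := sub_inf _ _ _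
  rw [h1]
  refine sup_le (le_inf ?_ ?_) ?_
  · exact sub_le_iff_le_add'.mpr inf_le_left
  · exact sub_le_iff_le_add.mpr (le_trans inf_le_right (le_add_of_nonneg_right hx))
  · exact le_trans (sub_nonpos.mpr inf_le_right) (le_inf hy hc)

lemma jordan_posPart {a b : E} (ha : 0 ≤ a) (hb : 0 ≤ b) (hd : a ⊓ b = 0) :
    (a - b)⁺ = a := by
  have h1 : (a - b)⁺ = (a ⊔ b) - b := by
    rw [posPart_def, sup_sub, sub_self]
  have h2 : a ⊔ b = a + b := by
    have := inf_add_sup a b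
    rw [hd, zero_add] at this
    exact this
  rw [h1, h2, add_sub_cancel_right]

lemma jordan_negPart {a b : E} (ha : 0 ≤ a) (hb : 0 ≤ b) (hd : a ⊓ b = 0) :
    (a - b)⁻ = b := by
  have : (a - b)⁻ = (b - a)⁺ := by rw [negPart_def, posPart_def, neg_sub]
  rw [this, jordan_posPart hb ha (by rw [inf_comm, hd])]

lemma arch (hDC : DedekindCompleteIn (Set.univ : Set E)) {x y : E} (hx : 0 ≤ x)
    (h : ∀ n : ℕ, (n : ℝ) • x ≤ y) : x = 0 := by
  obtain ⟨s, -, hub, hle⟩ := hDC (Set.range fun n : ℕ => (n : ℝ) • x) (Set.subset_univ _)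
    ⟨0, ⟨0, by simp⟩⟩ ⟨y, Set.mem_univ _, by rintro a ⟨n, rfl⟩; exact h n⟩
  have hsx : s ≤ s - x := by
    refine hle (s - x) (Set.mem_univ _) ?_
    rintro a ⟨n, rfl⟩
    have := hub (((n : ℝ) + 1) • x) ⟨n + 1, by push_cast; ring_nf⟩
    rw [add_smul, one_smul] at this
    exact le_sub_iff_add_le.mpr this
  have : x ≤ 0 := by
    have := sub_nonneg.mpr hsx
    rwa [sub_sub_cancel_left, neg_nonneg] at this
  exact le_antisymm this hx

end Erg


namespace Erg

/-- Decreasing to zero. -/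
def Down0 (p : ℕ → E) : Prop := Antitone p ∧ IsGLB (Set.range p) 0

lemma Down0.nonneg {p : ℕ → E} (hp : Down0 p) (n : ℕ) : 0 ≤ p n :=
  hp.2.1 ⟨n, rfl⟩

lemma Down0.le_zero {p : ℕ → E} (hp : Down0 p) {x : E} (hx : ∀ n, x ≤ p n) : x ≤ 0 :=
  hp.2.2 (by rintro a ⟨n, rfl⟩; exact hx n)

lemma Down0.eq_zero {p : ℕ → E} (hp : Down0 p) {x : E} (hx : ∀ n, |x| ≤ p n) : x = 0 := by
  have h1 : |x| ≤ 0 := hp.le_zero hx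
  exact le_antisymm ((le_abs_self x).trans h1) (neg_nonpos.mp ((neg_le_abs x).trans h1))

lemma Down0.add {p q : ℕ → E} (hp : Down0 p) (hq : Down0 q) :
    Down0 (fun n => p n + q n) := by
  constructor
  · intro n m hnm
    exact add_le_add (hp.1 hnm) (hq.1 hnm)
  · constructor
    · rintro a ⟨n, rfl⟩
      exact add_nonneg (hp.nonneg n) (hq.nonneg n)
    · rintro b hb
      have key : ∀ m, b - q m ≤ 0 := by
        intro m
        refine hp.le_zero ?_
        intro n
        have h1 : b ≤ p (max n m) + q (max n m) := hb ⟨max n m, rfl⟩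
        have h2 : p (max n m) + q (max n m) ≤ p n + q m :=
          add_le_add (hp.1 (le_max_left n m)) (hq.1 (le_max_right n m))
        exact sub_le_iff_le_add.mpr ((h1.trans h2).trans (by rw [add_comm]))
      refine hq.le_zero ?_
      intro m
      exact sub_nonpos.mp (key m)

lemma Down0.congr_bound {p q : ℕ → E} (hp : Down0 p) (hq : Antitone q)
    (h1 : ∀ n, 0 ≤ q n) (h2 : ∀ n, q n ≤ p n) : Down0 q := by
  refine ⟨hq, ⟨by rintro a ⟨n, rfl⟩; exact h1 n, ?_⟩⟩
  rintro b hb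
  exact hp.le_zero fun n => (hb ⟨n, rfl⟩).trans (h2 n)

/-- uniqueness of order limits -/
lemma orderConv_unique {u : ℕ → E} {l l' : E}
    (h : OrderConv u l) (h' : OrderConv u l') : l = l' := by
  obtain ⟨p, hp1, hp2, hp3⟩ := h
  obtain ⟨q, hq1, hq2, hq3⟩ := h'
  have := (Down0.add ⟨hp1, hp2⟩ ⟨hq1, hq2⟩).eq_zero (x := l - l') ?_
  · exact sub_eq_zero.mp this
  · intro n
    have heq : l - l' = (l - u n) + (u n - l') := by abel
    rw [heq]
    refine (abs_add_le (l - u n) (u n - l')).trans (add_le_add ?_ (hq3 n))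
    rw [abs_sub_comm]
    exact hp3 n

end Erg

namespace Erg

section BProj

variable (hDC : DedekindCompleteIn (Set.univ : Set E))

/-- the positive-part band "projection": `bp0 u x = sup_n (x ⊓ n u)` -/
noncomputable def bp0 (u x : E) : E :=
  (hDC (Set.range fun n : ℕ => x ⊓ (n : ℝ) • u) (Set.subset_univ _) ⟨_, ⟨0, rfl⟩⟩
    ⟨x, Set.mem_univ _, by rintro a ⟨n, rfl⟩; exact inf_le_left⟩).choose

lemma bp0_isLUB (u x : E) :
    IsLUB (Set.range fun n : ℕ => x ⊓ (n : ℝ) • u) (bp0 hDC u x) := by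
  obtain ⟨-, hub, hle⟩ := (hDC (Set.range fun n : ℕ => x ⊓ (n : ℝ) • u) (Set.subset_univ _)
    ⟨_, ⟨0, rfl⟩⟩
    ⟨x, Set.mem_univ _, by rintro a ⟨n, rfl⟩; exact inf_le_left⟩).choose_spec
  exact ⟨fun a ha => hub a ha, fun b hb => hle b (Set.mem_univ _) hb⟩

lemma bp0_le_self (u x : E) : bp0 hDC u x ≤ x :=
  (bp0_isLUB hDC u x).2 (by rintro a ⟨n, rfl⟩; exact inf_le_left)

lemma le_bp0 (u x : E) (n : ℕ) : x ⊓ (n : ℝ) • u ≤ bp0 hDC u x :=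
  (bp0_isLUB hDC u x).1 ⟨n, rfl⟩

lemma bp0_nonneg {u x : E} (hx : 0 ≤ x) : 0 ≤ bp0 hDC u x := by
  have := le_bp0 hDC u x 0
  rwa [Nat.cast_zero, zero_smul, inf_of_le_right hx] at this

lemma bp0_mono (u : E) {x y : E} (hxy : x ≤ y) : bp0 hDC u x ≤ bp0 hDC u y :=
  (bp0_isLUB hDC u x).2 (by
    rintro a ⟨n, rfl⟩
    exact le_trans (inf_le_inf_right _ hxy) (le_bp0 hDC u y n))

lemma bp0_add {u : E} (hu : 0 ≤ u) {x y : E} (hx : 0 ≤ x) (hy : 0 ≤ y) :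
    bp0 hDC u (x + y) = bp0 hDC u x + bp0 hDC u y := by
  apply le_antisymm
  · refine (bp0_isLUB hDC u (x + y)).2 ?_
    rintro a ⟨n, rfl⟩
    calc (x + y) ⊓ (n : ℝ) • u ≤ x ⊓ (n : ℝ) • u + y ⊓ (n : ℝ) • u :=
          inf_add_le' hx hy (smul_nonneg (Nat.cast_nonneg n) hu)
    _ ≤ bp0 hDC u x + bp0 hDC u y := add_le_add (le_bp0 _ _ _ _) (le_bp0 _ _ _ _)
  · -- sup A + sup B ≤ sup(A+B-ish)
    have key : ∀ n m : ℕ, x ⊓ (n : ℝ) • u + y ⊓ (m : ℝ) • u ≤ bp0 hDC u (x + y) := by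
      intro n m
      refine le_trans ?_ (le_bp0 hDC u (x + y) (n + m))
      refine le_inf (add_le_add inf_le_left inf_le_left) ?_
      push_cast
      rw [add_smul]
      exact add_le_add inf_le_right inf_le_right
    have h1 : ∀ n : ℕ, x ⊓ (n : ℝ) • u + bp0 hDC u y ≤ bp0 hDC u (x + y) := by
      intro n
      rw [add_comm]
      rw [← le_sub_iff_add_le]
      refine (bp0_isLUB hDC u y).2 ?_
      rintro a ⟨m, rfl⟩
      rw [le_sub_iff_add_le, add_comm]
      exact key n m
    rw [← le_sub_iff_add_le]
    refine (bp0_isLUB hDC u x).2 ?_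
    rintro a ⟨n, rfl⟩
    rw [le_sub_iff_add_le]
    exact h1 n

lemma bp0_zero (u : E) : bp0 hDC u 0 = 0 :=
  le_antisymm (bp0_le_self hDC u 0) (bp0_nonneg hDC le_rfl)

lemma bp0_smul {u : E} (hu : 0 ≤ u) {r : ℝ} (hr : 0 < r) (x : E) :
    bp0 hDC u (r • x) = r • bp0 hDC u x := by
  have hmono : ∀ z : E, ∀ s t : ℝ, s ≤ t → z ⊓ s • u ≤ z ⊓ t • u := fun z s t hst =>
    inf_le_inf_left z (smul_le_smul_right'' hst hu)
  refine (bp0_isLUB hDC u (r • x)).unique ?_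
  constructor
  · rintro a ⟨n, rfl⟩
    obtain ⟨m, hm⟩ := exists_nat_ge ((n : ℝ) / r)
    have h1 : (n : ℝ) ≤ r * m := by
      rw [div_le_iff₀ hr] at hm
      linarith [hm]
    calc r • x ⊓ (n : ℝ) • u ≤ r • x ⊓ (r * m) • u := hmono _ _ _ h1
    _ = r • (x ⊓ (m : ℝ) • u) := by rw [smul_inf_nn hr.le, mul_smul]
    _ ≤ r • bp0 hDC u x := smul_le_smul_of_nonneg_left (le_bp0 _ _ _ _) hr.le
  · rintro b hb
    have h2 : bp0 hDC u x ≤ r⁻¹ • b := by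
      refine (bp0_isLUB hDC u x).2 ?_
      rintro a ⟨m, rfl⟩
      obtain ⟨n, hn⟩ := exists_nat_ge (r * m)
      have h3 : r • (x ⊓ (m : ℝ) • u) ≤ b := by
        calc r • (x ⊓ (m : ℝ) • u) = r • x ⊓ (r * m) • u := by
              rw [smul_inf_nn hr.le, mul_smul]
        _ ≤ r • x ⊓ (n : ℝ) • u := hmono _ _ _ hn
        _ ≤ b := hb ⟨n, rfl⟩
      have := smul_le_smul_of_nonneg_left h3 (inv_nonneg.mpr hr.le)
      rwa [inv_smul_smul₀ hr.ne'] at this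
    have := smul_le_smul_of_nonneg_left h2 hr.le
    rwa [smul_inv_smul₀ hr.ne'] at this

lemma bp0_idem (u x : E) : bp0 hDC u (bp0 hDC u x) = bp0 hDC u x := by
  apply le_antisymm (bp0_le_self hDC u _)
  refine (bp0_isLUB hDC u x).2 ?_
  rintro a ⟨n, rfl⟩
  exact le_trans (le_inf (le_bp0 hDC u x n) inf_le_right) (le_bp0 hDC u _ n)

lemma bp0_disjoint {u x : E} (hu : 0 ≤ u) (hx : 0 ≤ x) (hd : x ⊓ u = 0) :
    bp0 hDC u x = 0 := by
  refine le_antisymm ((bp0_isLUB hDC u x).2 ?_) (bp0_nonneg hDC hx)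
  rintro a ⟨n, rfl⟩
  show x ⊓ (n : ℝ) • u ≤ 0
  rcases n with - | m
  · rw [Nat.cast_zero, zero_smul]
    exact inf_le_right
  · have h1 : x ⊓ ((m + 1 : ℕ) : ℝ) • u ≤ ((m + 1 : ℕ) : ℝ) • (x ⊓ u) := by
      rw [smul_inf_nn (by positivity)]
      refine inf_le_inf_right _ ?_
      have : (1 : ℝ) • x ≤ ((m + 1 : ℕ) : ℝ) • x := by
        refine smul_le_smul_right'' ?_ hx
        exact_mod_cast Nat.one_le_iff_ne_zero.mpr (Nat.succ_ne_zero m)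
      rwa [one_smul] at this
    rw [hd, smul_zero] at h1
    exact h1

lemma bp0_self {u : E} (hu : 0 ≤ u) : bp0 hDC u u = u := by
  apply le_antisymm (bp0_le_self hDC u u)
  have := le_bp0 hDC u u 1
  rwa [Nat.cast_one, one_smul, inf_idem] at this

/-- the band projection as a bare function -/
noncomputable def bpF (u x : E) : E := bp0 hDC u x⁺ - bp0 hDC u x⁻

lemma bpF_add {u : E} (hu : 0 ≤ u) (x y : E) :
    bpF hDC u (x + y) = bpF hDC u x + bpF hDC u y := by
  have hiden : (x + y)⁺ + (x⁻ + y⁻) = (x + y)⁻ + (x⁺ + y⁺) := by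
    have h1 := posPart_sub_negPart (x + y)
    have h2 := posPart_sub_negPart x
    have h3 := posPart_sub_negPart y
    have : (x + y)⁺ - (x + y)⁻ = (x⁺ - x⁻) + (y⁺ - y⁻) := by rw [h1, h2, h3]
    have h4 := congrArg (fun z => z + ((x + y)⁻ + (x⁻ + y⁻))) this
    simpa [sub_add_cancel] using by
      calc (x + y)⁺ + (x⁻ + y⁻)
          = ((x + y)⁺ - (x + y)⁻) + (x + y)⁻ + (x⁻ + y⁻) := by abel
        _ = ((x⁺ - x⁻) + (y⁺ - y⁻)) + (x + y)⁻ + (x⁻ + y⁻) := by rw [this]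
        _ = (x + y)⁻ + (x⁺ + y⁺) := by abel
  have H : bp0 hDC u ((x + y)⁺) + (bp0 hDC u (x⁻) + bp0 hDC u (y⁻)) =
      bp0 hDC u ((x + y)⁻) + (bp0 hDC u (x⁺) + bp0 hDC u (y⁺)) := by
    have e1 : bp0 hDC u ((x + y)⁺ + (x⁻ + y⁻)) =
        bp0 hDC u ((x + y)⁺) + (bp0 hDC u (x⁻) + bp0 hDC u (y⁻)) := by
      rw [bp0_add hDC hu (posPart_nonneg _) (add_nonneg (negPart_nonneg _) (negPart_nonneg _)),
        bp0_add hDC hu (negPart_nonneg _) (negPart_nonneg _)]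
    have e2 : bp0 hDC u ((x + y)⁻ + (x⁺ + y⁺)) =
        bp0 hDC u ((x + y)⁻) + (bp0 hDC u (x⁺) + bp0 hDC u (y⁺)) := by
      rw [bp0_add hDC hu (negPart_nonneg _) (add_nonneg (posPart_nonneg _) (posPart_nonneg _)),
        bp0_add hDC hu (posPart_nonneg _) (posPart_nonneg _)]
    rw [← e1, ← e2, hiden]
  show bp0 hDC u ((x + y)⁺) - bp0 hDC u ((x + y)⁻) =
    (bp0 hDC u (x⁺) - bp0 hDC u (x⁻)) + (bp0 hDC u (y⁺) - bp0 hDC u (y⁻))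
  calc bp0 hDC u ((x + y)⁺) - bp0 hDC u ((x + y)⁻)
      = (bp0 hDC u ((x + y)⁺) + (bp0 hDC u (x⁻) + bp0 hDC u (y⁻)))
        - (bp0 hDC u ((x + y)⁻) + (bp0 hDC u (x⁻) + bp0 hDC u (y⁻))) := by abel
    _ = (bp0 hDC u ((x + y)⁻) + (bp0 hDC u (x⁺) + bp0 hDC u (y⁺)))
        - (bp0 hDC u ((x + y)⁻) + (bp0 hDC u (x⁻) + bp0 hDC u (y⁻))) := by rw [H]
    _ = (bp0 hDC u (x⁺) - bp0 hDC u (x⁻)) + (bp0 hDC u (y⁺) - bp0 hDC u (y⁻)) := by abel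

lemma posPart_neg' (x : E) : (-x)⁺ = x⁻ := by rw [posPart_def, negPart_def]

lemma negPart_neg' (x : E) : (-x)⁻ = x⁺ := by rw [posPart_def, negPart_def, neg_neg]

lemma bpF_smul {u : E} (hu : 0 ≤ u) (r : ℝ) (x : E) :
    bpF hDC u (r • x) = r • bpF hDC u x := by
  rcases lt_trichotomy r 0 with hr | hr | hr
  · have hs : 0 < -r := by linarith
    have h1 : (r • x)⁺ = (-r) • x⁻ := by
      rw [show r • x = -((-r) • x) by rw [neg_smul, neg_neg], posPart_neg', negPart_smul_nn hs.le]
    have h2 : (r • x)⁻ = (-r) • x⁺ := by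
      rw [show r • x = -((-r) • x) by rw [neg_smul, neg_neg], negPart_neg', posPart_smul_nn hs.le]
    rw [bpF, h1, h2, bp0_smul hDC hu hs, bp0_smul hDC hu hs, bpF, smul_sub,
      neg_smul, neg_smul]
    abel
  · subst hr
    simp only [zero_smul, bpF, posPart_zero, negPart_zero, bp0_zero, sub_zero]
  · rw [bpF, posPart_smul_nn hr.le, negPart_smul_nn hr.le, bp0_smul hDC hu hr,
      bp0_smul hDC hu hr, bpF, smul_sub]

/-- the band projection onto the band generated by `u ≥ 0`, as a linear map -/
noncomputable def bprojL {u : E} (hu : 0 ≤ u) : E →ₗ[ℝ] E where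
  toFun := bpF hDC u
  map_add' := bpF_add hDC hu
  map_smul' := bpF_smul hDC hu

lemma bprojL_of_nonneg {u : E} (hu : 0 ≤ u) {x : E} (hx : 0 ≤ x) :
    bprojL hDC hu x = bp0 hDC u x := by
  show bpF hDC u x = bp0 hDC u x
  rw [bpF, posPart_eq_self.mpr hx, negPart_eq_zero.mpr hx, bp0_zero, sub_zero]

lemma bprojL_isBandProjection {u : E} (hu : 0 ≤ u) :
    IsBandProjection (bprojL hDC hu) := by
  constructor
  · intro x
    have ha : 0 ≤ bp0 hDC u x⁺ := bp0_nonneg hDC (posPart_nonneg x)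
    have hb : 0 ≤ bp0 hDC u x⁻ := bp0_nonneg hDC (negPart_nonneg x)
    have hd : bp0 hDC u x⁺ ⊓ bp0 hDC u x⁻ = 0 := by
      refine le_antisymm ?_ (le_inf ha hb)
      calc bp0 hDC u x⁺ ⊓ bp0 hDC u x⁻ ≤ x⁺ ⊓ x⁻ :=
            inf_le_inf (bp0_le_self hDC u _) (bp0_le_self hDC u _)
        _ = 0 := posPart_inf_negPart_eq_zero x
    show bpF hDC u (bpF hDC u x) = bpF hDC u x
    rw [bpF, bpF, jordan_posPart ha hb hd, jordan_negPart ha hb hd, bp0_idem, bp0_idem]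
  · intro x hx
    rw [bprojL_of_nonneg hDC hu hx]
    exact ⟨bp0_nonneg hDC hx, bp0_le_self hDC u x⟩

lemma bprojL_mono {u : E} (hu : 0 ≤ u) : Monotone (bprojL hDC hu) := by
  intro x y hxy
  have h1 : 0 ≤ bprojL hDC hu (y - x) := by
    rw [bprojL_of_nonneg hDC hu (sub_nonneg.mpr hxy)]
    exact bp0_nonneg hDC (sub_nonneg.mpr hxy)
  rw [map_sub] at h1
  exact sub_nonneg.mp h1

lemma abs_le_of_le {a b : E} (h1 : a ≤ b) (h2 : -a ≤ b) : |a| ≤ b := sup_le h1 h2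

lemma sandwich_low {g a : E} (ha : 0 ≤ a) :
    bprojL hDC (posPart_nonneg g) a ≤ (g + a)⁺ - g⁺ := by
  set P := bprojL hDC (posPart_nonneg g) with hP
  have hPg : P g = g⁺ := by
    show bpF hDC g⁺ g = g⁺
    rw [bpF, bp0_self hDC (posPart_nonneg g),
      bp0_disjoint hDC (posPart_nonneg g) (negPart_nonneg g)
        (by rw [inf_comm]; exact posPart_inf_negPart_eq_zero g), sub_zero]
  have h1 : P (g + a) = g⁺ + P a := by rw [map_add, hPg]
  have h2 : P ((g + a)⁺) ≤ (g + a)⁺ :=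
    ((bprojL_isBandProjection hDC (posPart_nonneg g)).2 _ (posPart_nonneg _)).2
  have h3 : P (g + a) ≤ P ((g + a)⁺) := bprojL_mono hDC (posPart_nonneg g) (le_posPart _)
  have h4 : g⁺ + P a ≤ (g + a)⁺ := by rw [← h1]; exact h3.trans h2
  exact le_sub_iff_add_le'.mpr h4

lemma sandwich_high {g a : E} (ha : 0 ≤ a) :
    (g + a)⁺ - g⁺ ≤ bprojL hDC (posPart_nonneg (g + a)) a := by
  set P := bprojL hDC (posPart_nonneg (g + a)) with hP
  have hP1 : P ((g + a)⁺) = (g + a)⁺ := by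
    rw [bprojL_of_nonneg hDC (posPart_nonneg (g + a)) (posPart_nonneg _)]
    exact bp0_self hDC (posPart_nonneg (g + a))
  have hP2 : P (g⁺) ≤ g⁺ :=
    ((bprojL_isBandProjection hDC (posPart_nonneg (g + a))).2 _ (posPart_nonneg _)).2
  have hle : (g + a)⁺ - g⁺ ≤ P ((g + a)⁺ - g⁺) := by
    rw [map_sub, hP1]
    exact sub_le_sub_left hP2 _
  have hha : (g + a)⁺ - g⁺ ≤ a := by
    refine sub_le_iff_le_add'.mpr ?_
    calc (g + a)⁺ ≤ g⁺ + a⁺ := posPart_add_le' g a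
      _ = g⁺ + a := by rw [posPart_eq_self.mpr ha]
  exact hle.trans (bprojL_mono hDC (posPart_nonneg (g + a)) hha)

lemma monoOfPos {A : E →ₗ[ℝ] E} (hA : ∀ x : E, 0 ≤ x → 0 ≤ A x) : Monotone A := by
  intro x y hxy
  have := hA (y - x) (sub_nonneg.mpr hxy)
  rw [map_sub] at this
  exact sub_nonneg.mp this

lemma sum_le_sum_range {f g : ℕ → E} {n : ℕ} (h : ∀ k, k < n → f k ≤ g k) :
    ∑ k ∈ range n, f k ≤ ∑ k ∈ range n, g k := by
  induction n with
  | zero => simp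
  | succ m ih =>
    rw [Finset.sum_range_succ, Finset.sum_range_succ]
    exact add_le_add (ih fun k hk => h k (by omega)) (h m (by omega))

include hDC in
lemma TS_interval {T S : E →ₗ[ℝ] E} (hTpos : ∀ x : E, 0 ≤ x → 0 ≤ T x)
    (hSpos : ∀ x : E, 0 ≤ x → 0 ≤ S x) {e : E} (he : 0 ≤ e) (hTe : T e = e)
    (hP : ∀ P : E →ₗ[ℝ] E, IsBandProjection P → T (S (P e)) = T (P e))
    {f : E} (hf0 : 0 ≤ f) (hfe : f ≤ e) : T (S f) = T f := by
  have key : ∀ n : ℕ, 1 ≤ n → |T (S f) - T f| ≤ (n : ℝ)⁻¹ • e := by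
    intro n hn
    have hn0 : (n : ℝ) ≠ 0 := Nat.cast_ne_zero.mpr (by omega)
    set u : ℕ → E := fun k => (f - ((k : ℝ) / (n : ℝ)) • e)⁺ with hu
    have hpos : ∀ k, (0 : E) ≤ f - ((k : ℝ) / (n : ℝ)) • e + (n : ℝ)⁻¹ • e → True :=
      fun _ _ => trivial
    set EE : ℕ → E := fun k => bprojL hDC (posPart_nonneg (f - ((k : ℝ) / (n : ℝ)) • e)) e
      with hEE
    have ha : (0 : E) ≤ (n : ℝ)⁻¹ • e := smul_nonneg (by positivity) he
    have hgau : ∀ k : ℕ, (f - (((k + 1 : ℕ) : ℝ) / (n : ℝ)) • e) + (n : ℝ)⁻¹ • e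
        = f - ((k : ℝ) / (n : ℝ)) • e := by
      intro k
      have hsc : (((k + 1 : ℕ) : ℝ) / (n : ℝ)) = (k : ℝ) / (n : ℝ) + (n : ℝ)⁻¹ := by
        push_cast
        field_simp
      rw [hsc, add_smul]
      abel
    have hL1 : ∀ k : ℕ, (n : ℝ)⁻¹ • EE (k + 1) ≤ u k - u (k + 1) := by
      intro k
      have := sandwich_low hDC (g := f - (((k + 1 : ℕ) : ℝ) / (n : ℝ)) • e)
        (a := (n : ℝ)⁻¹ • e) ha
      rw [map_smul, hgau k] at this
      exact this
    have hL2 : ∀ k : ℕ, u k - u (k + 1) ≤ (n : ℝ)⁻¹ • EE k := by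
      intro k
      have := sandwich_high hDC (g := f - (((k + 1 : ℕ) : ℝ) / (n : ℝ)) • e)
        (a := (n : ℝ)⁻¹ • e) ha
      rw [map_smul] at this
      simp only [hgau k] at this
      exact this
    have hu0 : u 0 = f := by
      simp only [hu, Nat.cast_zero, zero_div, zero_smul, sub_zero]
      exact posPart_eq_self.mpr hf0
    have hun : u n = 0 := by
      simp only [hu, div_self hn0, one_smul]
      exact posPart_eq_zero.mpr (sub_nonpos.mpr hfe)
    have htel : ∑ k ∈ range n, (u k - u (k + 1)) = f := by
      rw [Finset.sum_range_sub' u n, hu0, hun, sub_zero]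
    set A := ∑ k ∈ range n, (n : ℝ)⁻¹ • EE (k + 1) with hA
    set B := ∑ k ∈ range n, (n : ℝ)⁻¹ • EE k with hB
    have hAf : A ≤ f := by
      rw [← htel]
      exact sum_le_sum_range fun k _ => hL1 k
    have hfB : f ≤ B := by
      rw [← htel]
      exact sum_le_sum_range fun k _ => hL2 k
    have hBA : B - A ≤ (n : ℝ)⁻¹ • e := by
      have h1 : B - A = (n : ℝ)⁻¹ • EE 0 - (n : ℝ)⁻¹ • EE n := by
        rw [hA, hB, ← Finset.sum_sub_distrib]
        exact Finset.sum_range_sub' (fun k => (n : ℝ)⁻¹ • EE k) n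
      rw [h1]
      have h2 : EE 0 ≤ e :=
        ((bprojL_isBandProjection hDC _).2 e he).2
      have h3 : (0 : E) ≤ EE n := ((bprojL_isBandProjection hDC _).2 e he).1
      calc (n : ℝ)⁻¹ • EE 0 - (n : ℝ)⁻¹ • EE n ≤ (n : ℝ)⁻¹ • EE 0 - 0 := by
            exact sub_le_sub_left (smul_nonneg (by positivity) h3) _
        _ = (n : ℝ)⁻¹ • EE 0 := sub_zero _
        _ ≤ (n : ℝ)⁻¹ • e := smul_le_smul_of_nonneg_left h2 (by positivity)
    have hTSA : T (S A) = T A := by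
      rw [hA, map_sum, map_sum, map_sum]
      refine Finset.sum_congr rfl fun k _ => ?_
      rw [map_smul, map_smul, map_smul, hP _ (bprojL_isBandProjection hDC _)]
    have hTSB : T (S B) = T B := by
      rw [hB, map_sum, map_sum, map_sum]
      refine Finset.sum_congr rfl fun k _ => ?_
      rw [map_smul, map_smul, map_smul, hP _ (bprojL_isBandProjection hDC _)]
    have hTmono : Monotone T := monoOfPos hTpos
    have hSmono : Monotone S := monoOfPos hSpos
    have hTBA : T B - T A ≤ (n : ℝ)⁻¹ • e := by
      have := hTmono hBA
      rw [map_sub, map_smul, hTe] at this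
      exact this
    refine abs_le_of_le ?_ ?_
    · calc T (S f) - T f ≤ T (S B) - T A :=
            sub_le_sub (hTmono (hSmono hfB)) (hTmono hAf)
        _ = T B - T A := by rw [hTSB]
        _ ≤ (n : ℝ)⁻¹ • e := hTBA
    · rw [neg_sub]
      calc T f - T (S f) ≤ T B - T (S A) :=
            sub_le_sub (hTmono hfB) (hTmono (hSmono hAf))
        _ = T B - T A := by rw [hTSA]
        _ ≤ (n : ℝ)⁻¹ • e := hTBA
  have habs : ∀ m : ℕ, (m : ℝ) • |T (S f) - T f| ≤ e := by
    intro m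
    rcases Nat.eq_zero_or_pos m with hm | hm
    · subst hm
      simpa using he
    · have h1 := key m hm
      have h2 := smul_le_smul_of_nonneg_left h1 (show (0:ℝ) ≤ (m:ℝ) from Nat.cast_nonneg m)
      rwa [smul_inv_smul₀ (Nat.cast_ne_zero.mpr (by omega))] at h2
  have := arch hDC (abs_nonneg _) habs
  have h0 : T (S f) - T f = 0 :=
    le_antisymm ((le_abs_self _).trans this.le) (neg_nonpos.mp ((neg_le_abs _).trans this.le))
  exact sub_eq_zero.mp h0

end BProj

lemma Down0.map {p : ℕ → E} (hp : Down0 p) {A : E →ₗ[ℝ] E}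
    (hApos : ∀ x : E, 0 ≤ x → 0 ≤ A x)
    (hAoc : ∀ B : Set E, B.Nonempty → DirectedOn (· ≥ ·) B → IsGLB B 0 → IsGLB (A '' B) 0) :
    Down0 (fun n => A (p n)) := by
  constructor
  · intro n m hmn
    exact monoOfPos hApos (hp.1 hmn)
  · have hdir : DirectedOn (· ≥ ·) (Set.range p) := by
      rintro x ⟨n, rfl⟩ y ⟨m, rfl⟩
      exact ⟨p (max n m), ⟨max n m, rfl⟩, hp.1 (le_max_left n m), hp.1 (le_max_right n m)⟩
    have h1 := hAoc (Set.range p) ⟨p 0, ⟨0, rfl⟩⟩ hdir hp.2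
    have h2 : A '' Set.range p = Set.range (fun n => A (p n)) := by
      rw [← Set.range_comp]
      rfl
    rwa [h2] at h1

lemma ocOfGLBIn {T' : E →ₗ[ℝ] E}
    (h5 : ∀ A : Set E, A ⊆ Set.univ → A.Nonempty → DirectedOn (· ≥ ·) A →
      IsGLBIn Set.univ A 0 → IsGLBIn Set.univ (T' '' A) 0) :
    ∀ B : Set E, B.Nonempty → DirectedOn (· ≥ ·) B → IsGLB B 0 → IsGLB (T' '' B) 0 := by
  intro B h1 h2 h3
  have h4 := h5 B (Set.subset_univ _) h1 h2
    ⟨fun a ha => h3.1 ha, fun b _ hb => h3.2 fun a ha => hb a ha⟩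
  exact ⟨fun a ha => h4.1 a ha, fun b hb => h4.2 b (Set.mem_univ _) fun a ha => hb ha⟩

lemma down0_invSmul (hDC : DedekindCompleteIn (Set.univ : Set E)) {M : E} (hM : 0 ≤ M) :
    Down0 (fun n : ℕ => (max (n : ℝ) 1)⁻¹ • M) := by
  constructor
  · intro n m hnm
    refine smul_le_smul_right'' ?_ hM
    have h1 : (0 : ℝ) < max (n : ℝ) 1 := by positivity
    have h2 : max (n : ℝ) 1 ≤ max (m : ℝ) 1 :=
      max_le_max (Nat.cast_le.mpr hnm) le_rfl
    exact inv_anti₀ h1 h2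
  · constructor
    · rintro a ⟨n, rfl⟩
      exact smul_nonneg (by positivity) hM
    · rintro b hb
      have hb' : ∀ n : ℕ, (n : ℝ) • b⁺ ≤ M := by
        intro n
        have h1 : b ≤ (max (n : ℝ) 1)⁻¹ • M := hb ⟨n, rfl⟩
        have h2 : b⁺ ≤ (max (n : ℝ) 1)⁻¹ • M :=
          sup_le h1 (smul_nonneg (by positivity) hM)
        have h3 := smul_le_smul_of_nonneg_left h2
          (show (0 : ℝ) ≤ max (n : ℝ) 1 by positivity)
        rw [smul_inv_smul₀ (show (0:ℝ) < max (n:ℝ) 1 by positivity).ne'] at h3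
        calc (n : ℝ) • b⁺ ≤ (max (n : ℝ) 1) • b⁺ :=
              smul_le_smul_right'' (le_max_left _ _) (posPart_nonneg b)
          _ ≤ M := h3
      have h4 := arch hDC (posPart_nonneg b) hb'
      calc b ≤ b⁺ := le_posPart b
        _ = 0 := h4

lemma down0_truncation (hDC : DedekindCompleteIn (Set.univ : Set E)) {e : E}
    (hwu : IsWeakOrderUnitIn (Set.univ : Set E) e) {f : E} (hf : 0 ≤ f) :
    Down0 (fun m : ℕ => f - f ⊓ (m : ℝ) • e) := by
  have he : 0 ≤ e := hwu.1.le
  constructor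
  · intro n m hnm
    exact sub_le_sub_left
      (inf_le_inf_left f (smul_le_smul_right'' (Nat.cast_le.mpr hnm) he)) f
  · constructor
    · rintro a ⟨m, rfl⟩
      exact sub_nonneg.mpr inf_le_left
    · rintro b hb
      have hwle : ∀ m : ℕ, b⁺ ≤ f - f ⊓ (m : ℝ) • e := by
        intro m
        exact sup_le (hb ⟨m, rfl⟩) (sub_nonneg.mpr inf_le_left)
      have hind : ∀ m : ℕ, (m : ℝ) • (b⁺ ⊓ e) ≤ f ⊓ (m : ℝ) • e := by
        intro m
        induction m with
        | zero =>
          rw [Nat.cast_zero, zero_smul, zero_smul]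
          exact le_inf hf le_rfl
        | succ m ih =>
          have hcast : ((m + 1 : ℕ) : ℝ) = (m : ℝ) + 1 := by push_cast; ring
          rw [hcast, add_smul, one_smul, add_smul, one_smul]
          refine le_inf ?_ ?_
          · calc (m : ℝ) • (b⁺ ⊓ e) + b⁺ ⊓ e
                ≤ f ⊓ (m : ℝ) • e + b⁺ := add_le_add (ih.trans le_rfl) inf_le_left
              _ ≤ f := by
                  have := hwle m
                  rw [le_sub_iff_add_le, add_comm] at this
                  exact this
          · exact add_le_add
              (smul_le_smul_of_nonneg_left inf_le_right (Nat.cast_nonneg m)) inf_le_right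
      have harch : ∀ m : ℕ, (m : ℝ) • (b⁺ ⊓ e) ≤ f := fun m => (hind m).trans inf_le_left
      have h0 : b⁺ ⊓ e = 0 :=
        arch hDC (le_inf (posPart_nonneg b) he) harch
      have hb0 : b⁺ = 0 := hwu.2 b⁺ (Set.mem_univ _) (posPart_nonneg b) h0
      calc b ≤ b⁺ := le_posPart b
        _ = 0 := hb0

lemma TS_eq_T (hDC : DedekindCompleteIn (Set.univ : Set E)) {T S : E →ₗ[ℝ] E} {e : E}
    (hwu : IsWeakOrderUnitIn (Set.univ : Set E) e)
    (hTpos : ∀ x : E, 0 ≤ x → 0 ≤ T x) (hSpos : ∀ x : E, 0 ≤ x → 0 ≤ S x)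
    (hTe : T e = e)
    (hToc : ∀ B : Set E, B.Nonempty → DirectedOn (· ≥ ·) B → IsGLB B 0 → IsGLB (T '' B) 0)
    (hSoc : OrderContinuousOp S)
    (hP : ∀ P : E →ₗ[ℝ] E, IsBandProjection P → T (S (P e)) = T (P e)) :
    ∀ f : E, T (S f) = T f := by
  have he : 0 ≤ e := hwu.1.le
  have htrunc : ∀ (f : E) (m : ℕ), 0 ≤ f → T (S (f ⊓ (m : ℝ) • e)) = T (f ⊓ (m : ℝ) • e) := by
    intro f m hf
    rcases Nat.eq_zero_or_pos m with hm | hm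
    · subst hm
      rw [Nat.cast_zero, zero_smul, inf_of_le_right hf, map_zero, map_zero]
    · have hm0 : (m : ℝ) ≠ 0 := Nat.cast_ne_zero.mpr (by omega)
      set z := (m : ℝ)⁻¹ • (f ⊓ (m : ℝ) • e) with hz
      have hz0 : 0 ≤ z :=
        smul_nonneg (by positivity) (le_inf hf (smul_nonneg (Nat.cast_nonneg m) he))
      have hze : z ≤ e := by
        rw [hz, smul_inf_nn (by positivity : (0:ℝ) ≤ (m:ℝ)⁻¹), inv_smul_smul₀ hm0]
        exact inf_le_right
      have h1 : T (S z) = T z := TS_interval hDC hTpos hSpos he hTe hP hz0 hze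
      have h2 : f ⊓ (m : ℝ) • e = (m : ℝ) • z := by
        rw [hz, smul_inv_smul₀ hm0]
      calc T (S (f ⊓ (m : ℝ) • e)) = T (S ((m : ℝ) • z)) := by rw [← h2]
        _ = (m : ℝ) • T (S z) := by rw [map_smul S (m : ℝ) z, map_smul T (m : ℝ) (S z)]
        _ = (m : ℝ) • T z := by rw [h1]
        _ = T ((m : ℝ) • z) := (map_smul T (m : ℝ) z).symm
        _ = T (f ⊓ (m : ℝ) • e) := by rw [← h2]
  have hpos : ∀ f : E, 0 ≤ f → T (S f) = T f := by
    intro f hf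
    set d : ℕ → E := fun m => f - f ⊓ (m : ℝ) • e with hd
    have hdd : Down0 d := down0_truncation hDC hwu hf
    have hdn : ∀ m, 0 ≤ d m := hdd.nonneg
    have hkey : ∀ m : ℕ, |T (S f) - T f| ≤ T (S (d m)) + T (d m) := by
      intro m
      have h1 : T (S f) - T f = T (S (d m)) - T (d m) := by
        have h2 : d m + f ⊓ (m : ℝ) • e = f := by
          show f - f ⊓ (m : ℝ) • e + f ⊓ (m : ℝ) • e = f
          exact sub_add_cancel _ _
        conv_lhs => rw [← h2]
        simp only [map_add]
        rw [htrunc f m hf]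
        abel
      rw [h1]
      have ha : 0 ≤ T (S (d m)) := hTpos _ (hSpos _ (hdn m))
      have hb : 0 ≤ T (d m) := hTpos _ (hdn m)
      refine abs_le_of_le ?_ ?_
      · exact sub_le_iff_le_add.mpr (le_add_of_le_of_nonneg (le_add_of_nonneg_right hb) hb)
      · rw [neg_sub]
        exact sub_le_iff_le_add.mpr (le_add_of_le_of_nonneg (le_add_of_nonneg_left ha) ha)
    have hDSd : Down0 (fun m => S (d m)) := hdd.map hSpos hSoc
    have hDTSd : Down0 (fun m => T (S (d m))) := hDSd.map hTpos hToc
    have hDTd : Down0 (fun m => T (d m)) := hdd.map hTpos hToc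
    have := (hDTSd.add hDTd).eq_zero hkey
    exact sub_eq_zero.mp this
  intro f
  have hsplit : f = f⁺ - f⁻ := (posPart_sub_negPart f).symm
  rw [hsplit, map_sub, map_sub, map_sub, hpos _ (posPart_nonneg f), hpos _ (negPart_nonneg f)]

end Erg

namespace Erg

lemma abs_sub_le'' (a b : E) : |a - b| ≤ |a| + |b| := by
  rw [sub_eq_add_neg]
  exact (abs_add_le a (-b)).trans (by rw [abs_neg])

lemma ces_zero (S : E →ₗ[ℝ] E) (f : E) : ces S f 0 = 0 := by
  simp [ces]

lemma pow_apply_of_fixed {S : E →ₗ[ℝ] E} {f : E} (hf : S f = f) (k : ℕ) : (S ^ k) f = f := by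
  induction k with
  | zero => rw [pow_zero, Module.End.one_apply]
  | succ k ih => rw [pow_succ, Module.End.mul_apply, hf, ih]

lemma ces_of_fixed {S : E →ₗ[ℝ] E} {f : E} (hf : S f = f) {n : ℕ} (hn : 1 ≤ n) :
    ces S f n = f := by
  have hn0 : (n : ℝ) ≠ 0 := Nat.cast_ne_zero.mpr (by omega)
  rw [ces]
  have h1 : ∑ k ∈ range n, (S ^ k) f = (n : ℝ) • f := by
    rw [Finset.sum_congr rfl fun k _ => pow_apply_of_fixed hf k, Finset.sum_const,
      Finset.card_range, ← Nat.cast_smul_eq_nsmul ℝ]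
  rw [h1, smul_smul, inv_mul_cancel₀ hn0, one_smul]

lemma ces_succ_sub (S : E →ₗ[ℝ] E) (f : E) (n : ℕ) :
    S (ces S f n) - ces S f n = (n : ℝ)⁻¹ • ((S ^ n) f - f) := by
  have h1 : S (ces S f n) = (n : ℝ)⁻¹ • ∑ k ∈ range n, (S ^ (k + 1)) f := by
    rw [ces, map_smul, map_sum]
    congr 1
    exact Finset.sum_congr rfl fun k _ => by rw [pow_succ', Module.End.mul_apply]
  have h2 : ∑ k ∈ range n, (S ^ (k + 1)) f
      = (∑ k ∈ range n, (S ^ k) f + (S ^ n) f) - f := by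
    have h3 := Finset.sum_range_succ' (fun k => (S ^ k) f) n
    have h4 := Finset.sum_range_succ (fun k => (S ^ k) f) n
    rw [h4, pow_zero, Module.End.one_apply] at h3
    rw [eq_sub_iff_add_eq, ← h3]
  rw [h1, h2, ces, smul_sub, smul_add, smul_sub]
  abel

lemma pow_n_eq (S : E →ₗ[ℝ] E) (f : E) (n : ℕ) :
    (S ^ n) f = ((n : ℝ) + 1) • ces S f (n + 1) - (n : ℝ) • ces S f n := by
  have hA : ((n : ℝ) + 1) • ces S f (n + 1) = ∑ k ∈ range (n + 1), (S ^ k) f := by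
    rw [ces, smul_smul, show ((n : ℝ) + 1) = ((n + 1 : ℕ) : ℝ) by push_cast; ring,
      mul_inv_cancel₀ (Nat.cast_ne_zero.mpr (Nat.succ_ne_zero n)), one_smul]
  have hB : (n : ℝ) • ces S f n = ∑ k ∈ range n, (S ^ k) f := by
    rcases Nat.eq_zero_or_pos n with hn | hn
    · subst hn; simp [ces]
    · rw [ces, smul_smul, mul_inv_cancel₀ (Nat.cast_ne_zero.mpr (by omega)), one_smul]
  rw [hA, hB, Finset.sum_range_succ]
  abel

end Erg

/-- Corollary 3.4: with `E = 𝓔_S`, the system `(E,T,S,e)` is ergodic iff `T = L_S`. -/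
theorem ergodic_iff_T_eq_LS (T S : E →ₗ[ℝ] E) (e : E) (h : IsCEPS T S e)
    (L : E → E) (hL : ∀ f, OrderConv (ces S f) (L f)) :
    IsErgodic T S e ↔ ∀ f, T f = L f := by
  obtain ⟨hDC, hwu, hT, hTe, hSriesz, hSoc, hSe, hP⟩ := h
  obtain ⟨-, -, -, hTpos', hToc', hTidem', -, -, -⟩ := hT
  have hTpos : ∀ x : E, 0 ≤ x → 0 ≤ T x := fun x hx => hTpos' x (Set.mem_univ _) hx
  have hTidem : ∀ x : E, T (T x) = T x := fun x => hTidem' x (Set.mem_univ _)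
  have hToc : ∀ B : Set E, B.Nonempty → DirectedOn (· ≥ ·) B → IsGLB B 0 →
      IsGLB (T '' B) 0 := Erg.ocOfGLBIn fun A h1 h2 h3 h4 => hToc' A h1 h2 h3 h4
  have hSpos : ∀ x : E, 0 ≤ x → 0 ≤ S x := by
    intro x hx
    have h1 := hSriesz x 0
    rw [sup_of_le_left hx, map_zero] at h1
    rw [h1]
    exact le_sup_right
  have hSabs : ∀ x : E, |S x| = S |x| := by
    intro x
    have h1 : S |x| = S x ⊔ S (-x) := hSriesz x (-x)
    rw [map_neg] at h1
    exact h1.symm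
  have hTabs : ∀ x : E, |T x| ≤ T |x| := by
    intro x
    refine Erg.abs_le_of_le (Erg.monoOfPos hTpos (le_abs_self x)) ?_
    rw [← map_neg]
    exact Erg.monoOfPos hTpos (neg_le_abs x)
  have hTS : ∀ x : E, T (S x) = T x :=
    Erg.TS_eq_T hDC hwu hTpos hSpos hTe hToc hSoc hP
  constructor
  · -- ergodic → T = L
    intro hErg f
    obtain ⟨p, hp1, hp2, hp3⟩ := hL f
    have hdp : Erg.Down0 p := ⟨hp1, hp2⟩
    set lf := L f with hlf
    -- Step 1 : S lf = lf
    have hM : (0 : E) ≤ p 0 + |lf - f| := add_nonneg (hdp.nonneg 0) (abs_nonneg _)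
    have hX : ∀ n : ℕ, |S (ces S f n) - ces S f n|
        ≤ p n + p n + (max (n : ℝ) 1)⁻¹ • (p 0 + |lf - f|) := by
      intro n
      rcases Nat.eq_zero_or_pos n with hn | hn
      · subst hn
        rw [Erg.ces_zero, map_zero, sub_zero, abs_zero]
        exact add_nonneg (add_nonneg (hdp.nonneg 0) (hdp.nonneg 0))
          (smul_nonneg (by positivity) hM)
      · have hn0 : (n : ℝ) ≠ 0 := Nat.cast_ne_zero.mpr (by omega)
        have hmax : max (n : ℝ) 1 = (n : ℝ) := max_eq_left (by exact_mod_cast hn)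
        rw [hmax]
        have hdec : S (ces S f n) - ces S f n
            = ((ces S f (n + 1) - lf) - (ces S f n - lf))
              + ((n : ℝ)⁻¹ • (ces S f (n + 1) - lf) + (n : ℝ)⁻¹ • (lf - f)) := by
          rw [Erg.ces_succ_sub S f n, Erg.pow_n_eq S f n]
          match_scalars <;> field_simp <;> ring
        rw [hdec]
        have hb1 : |(ces S f (n + 1) - lf) - (ces S f n - lf)| ≤ p n + p n :=
          (Erg.abs_sub_le'' _ _).trans
            (add_le_add ((hp3 (n + 1)).trans (hp1 (Nat.le_succ n))) (hp3 n))
        have hb2 : |(n : ℝ)⁻¹ • (ces S f (n + 1) - lf) + (n : ℝ)⁻¹ • (lf - f)|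
            ≤ (n : ℝ)⁻¹ • (p 0 + |lf - f|) := by
          refine (abs_add_le _ _).trans ?_
          rw [Erg.abs_smul_nn (by positivity), Erg.abs_smul_nn (by positivity), ← smul_add]
          refine smul_le_smul_of_nonneg_left ?_ (by positivity)
          exact add_le_add ((hp3 (n + 1)).trans (hp1 (Nat.zero_le (n + 1)))) le_rfl
        exact (abs_add_le _ _).trans (add_le_add hb1 hb2)
    have hSp : Erg.Down0 (fun n => S (p n)) := hdp.map hSpos hSoc
    have hq : Erg.Down0 (fun n => p n + p n + (max (n : ℝ) 1)⁻¹ • (p 0 + |lf - f|)) :=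
      (hdp.add hdp).add (Erg.down0_invSmul hDC hM)
    have hSlf : S lf = lf := by
      have hb : ∀ n : ℕ, |S lf - lf|
          ≤ S (p n) + (p n + p n + (max (n : ℝ) 1)⁻¹ • (p 0 + |lf - f|) + p n) := by
        intro n
        have e1 : S lf - lf = (S lf - S (ces S f n))
            + ((S (ces S f n) - ces S f n) + (ces S f n - lf)) := by abel
        rw [e1]
        refine (abs_add_le _ _).trans (add_le_add ?_
          ((abs_add_le _ _).trans (add_le_add (hX n) (hp3 n))))
        rw [← map_sub, hSabs]
        refine Erg.monoOfPos hSpos ?_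
        rw [abs_sub_comm]
        exact hp3 n
      have hD : Erg.Down0 (fun n => S (p n)
          + (p n + p n + (max (n : ℝ) 1)⁻¹ • (p 0 + |lf - f|) + p n)) :=
        hSp.add (hq.add hdp)
      exact sub_eq_zero.mp (hD.eq_zero hb)
    -- Step 2 : the Cesàro means of lf converge to lf
    have hconv2 : OrderConv (ces S lf) lf := by
      refine ⟨fun n => if n = 0 then |lf| else 0, ?_, ⟨?_, ?_⟩, ?_⟩
      · intro a b hab
        rcases Nat.eq_zero_or_pos b with hb | hb
        · subst hb
          have : a = 0 := by omega
          subst this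
          exact le_rfl
        · have hb' : ¬ (b = 0) := by omega
          simp only [hb', if_false]
          split
          · exact abs_nonneg lf
          · exact le_rfl
      · rintro x ⟨n, rfl⟩
        dsimp only
        split
        · exact abs_nonneg lf
        · exact le_rfl
      · rintro b hb
        have := hb ⟨1, rfl⟩
        simpa using this
      · intro n
        rcases Nat.eq_zero_or_pos n with hn | hn
        · subst hn
          show |ces S lf 0 - lf| ≤ if 0 = 0 then |lf| else 0
          rw [if_pos rfl, Erg.ces_zero, zero_sub, abs_neg]
        · have hn' : ¬ (n = 0) := by omega
          show |ces S lf n - lf| ≤ if n = 0 then |lf| else 0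
          rw [if_neg hn', Erg.ces_of_fixed hSlf hn, sub_self, abs_zero]
    -- Step 3 : ergodicity gives T lf = lf
    obtain ⟨g, hg⟩ := hErg lf lf hSlf hconv2
    have hTlf : T lf = lf := by
      rw [← hg]
      exact hTidem g
    -- Step 4 : T (ces S f n) = T f and pass to the limit
    have hTpow : ∀ k : ℕ, T ((S ^ k) f) = T f := by
      intro k
      induction k with
      | zero => rw [pow_zero, Module.End.one_apply]
      | succ k ih => rw [pow_succ', Module.End.mul_apply, hTS, ih]
    have hTces : ∀ n : ℕ, 1 ≤ n → T (ces S f n) = T f := by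
      intro n hn
      have hn0 : (n : ℝ) ≠ 0 := Nat.cast_ne_zero.mpr (by omega)
      rw [ces, map_smul, map_sum, Finset.sum_congr rfl fun k _ => hTpow k,
        Finset.sum_const, Finset.card_range, ← Nat.cast_smul_eq_nsmul ℝ, smul_smul,
        inv_mul_cancel₀ hn0, one_smul]
    have hTp : Erg.Down0 (fun n => T (p n)) := hdp.map hTpos hToc
    have hfinal : ∀ n : ℕ, |T f - T lf| ≤ T (p n) := by
      intro n
      have h1 : |T f - T lf| ≤ T (p (n + 1)) := by
        rw [← hTces (n + 1) (by omega), ← map_sub]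
        exact (hTabs _).trans (Erg.monoOfPos hTpos (hp3 (n + 1)))
      exact h1.trans (Erg.monoOfPos hTpos (hp1 (Nat.le_succ n)))
    have h0 : T f - T lf = 0 := hTp.eq_zero hfinal
    rw [sub_eq_zero] at h0
    rw [h0, hTlf]
  · -- T = L → ergodic
    intro hTL f l hSf hconv
    exact ⟨f, by rw [hTL f, Erg.orderConv_unique (hL f) hconv]⟩
end

section
/- Let (E,T,S,e) be a conditional expectation preserving system and f, g ∈ E_e. Then (1/n) Σ_{k=0}^{n−1} T((S^k f)·g) → Tf·Tg in order as n → ∞ if and only if T(L_S f · g) = Tf · Tg. -/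
open Finset

/- `E` is a Riesz space (real vector lattice). -/
variable {E : Type*} [AddCommGroup E] [Lattice E]
  [CovariantClass E E (· + ·) (· ≤ ·)] [Module ℝ E] [PosSMulMono ℝ E]

/-- `m` is the `f`-algebra multiplication on the principal ideal `E_e`:  commutative,
bilinear, positive, with unit `e`, determined on components by `Pe·Qe = PQe` for band
projections `P, Q`, and order continuous (so extendable from components by order limits). -/
def IsFAlgMulOn (e : E) (m : E → E → E) : Prop :=
  (∀ f ∈ idealE e, ∀ g ∈ idealE e, m f g ∈ idealE e) ∧
  (∀ f ∈ idealE e, ∀ g ∈ idealE e, m f g = m g f) ∧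
  (∀ f ∈ idealE e, ∀ g ∈ idealE e, ∀ h ∈ idealE e, m (f + g) h = m f h + m g h) ∧
  (∀ r : ℝ, ∀ f ∈ idealE e, ∀ g ∈ idealE e, m (r • f) g = r • m f g) ∧
  (∀ f ∈ idealE e, ∀ g ∈ idealE e, 0 ≤ f → 0 ≤ g → 0 ≤ m f g) ∧
  (∀ f ∈ idealE e, m e f = f) ∧
  (∀ P Q : E →ₗ[ℝ] E, IsBandProjection P → IsBandProjection Q → m (P e) (Q e) = P (Q e)) ∧
  (∀ g ∈ idealE e, 0 ≤ g → ∀ (u : ℕ → E) (l : E), (∀ n, u n ∈ idealE e) → l ∈ idealE e →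
      OrderConv u l → OrderConv (fun n => m (u n) g) (m l g))


section AuxLemmas

variable {E : Type*} [AddCommGroup E] [Lattice E]
  [CovariantClass E E (· + ·) (· ≤ ·)] [Module ℝ E] [PosSMulMono ℝ E]

private lemma le_zero_of_lb {p : ℕ → E} (hp0 : IsGLB (Set.range p) 0)
    {b : E} (hb : ∀ n, b ≤ p n) : b ≤ 0 :=
  hp0.2 (by rintro x ⟨n, rfl⟩; exact hb n)

private lemma eq_zero_of_abs_le {p : ℕ → E} (hp0 : IsGLB (Set.range p) 0)
    {a : E} (ha : ∀ n, |a| ≤ p n) : a = 0 := by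
  have h0 : |a| ≤ 0 := le_zero_of_lb hp0 ha
  exact le_antisymm ((le_abs_self a).trans h0) (neg_nonpos.mp ((neg_le_abs a).trans h0))

private lemma glb_zero_add {p q : ℕ → E} (hp : Antitone p) (hq : Antitone q)
    (hp0 : IsGLB (Set.range p) 0) (hq0 : IsGLB (Set.range q) 0) :
    IsGLB (Set.range fun n => p n + q n) 0 := by
  constructor
  · rintro x ⟨n, rfl⟩
    exact add_nonneg (hp0.1 ⟨n, rfl⟩) (hq0.1 ⟨n, rfl⟩)
  · intro b hb
    have hbp : ∀ n, b ≤ p n := by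
      intro n
      have hbq : ∀ k, b - p n ≤ q k := by
        intro k
        have h1 : b ≤ p (max n k) + q (max n k) := hb ⟨max n k, rfl⟩
        have h2 : p (max n k) + q (max n k) ≤ p n + q k :=
          add_le_add (hp (le_max_left n k)) (hq (le_max_right n k))
        exact sub_le_iff_le_add'.mpr (h1.trans h2)
      exact sub_nonpos.mp (le_zero_of_lb hq0 hbq)
    exact le_zero_of_lb hp0 hbp

private lemma orderConv_sub {u v : ℕ → E} {a b : E}
    (hu : OrderConv u a) (hv : OrderConv v b) :
    OrderConv (fun n => u n - v n) (a - b) := by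
  obtain ⟨p, hp, hp0, hpb⟩ := hu
  obtain ⟨q, hq, hq0, hqb⟩ := hv
  refine ⟨fun n => p n + q n, fun i j hij => add_le_add (hp hij) (hq hij),
    glb_zero_add hp hq hp0 hq0, fun n => ?_⟩
  have he : u n - v n - (a - b) = (u n - a) + -(v n - b) := by abel
  rw [he]
  refine (abs_add_le _ _).trans ?_
  rw [abs_neg]
  exact add_le_add (hpb n) (hqb n)

private lemma orderConv_unique {u : ℕ → E} {a b : E}
    (h1 : OrderConv u a) (h2 : OrderConv u b) : a = b := by
  obtain ⟨p, hp, hp0, hpb⟩ := h1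
  obtain ⟨q, hq, hq0, hqb⟩ := h2
  have hab : ∀ n, |a - b| ≤ p n + q n := by
    intro n
    have he : a - b = -(u n - a) + (u n - b) := by abel
    rw [he]
    refine (abs_add_le _ _).trans ?_
    rw [abs_neg]
    exact add_le_add (hpb n) (hqb n)
  have := eq_zero_of_abs_le (glb_zero_add hp hq hp0 hq0) hab
  exact sub_eq_zero.mp this

private lemma pos_linmap_mono {T : E →ₗ[ℝ] E} (hpos : ∀ x : E, 0 ≤ x → 0 ≤ T x)
    {a b : E} (hab : a ≤ b) : T a ≤ T b := by
  have := hpos _ (sub_nonneg.2 hab)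
  rw [map_sub, sub_nonneg] at this
  exact this

private lemma pos_linmap_abs {T : E →ₗ[ℝ] E} (hpos : ∀ x : E, 0 ≤ x → 0 ≤ T x)
    (a : E) : |T a| ≤ T |a| := by
  refine abs_le'.mpr ⟨pos_linmap_mono hpos (le_abs_self a), ?_⟩
  have := pos_linmap_mono hpos (neg_le_abs a)
  rw [map_neg] at this
  exact this

private lemma condexp_orderConv (T : E →ₗ[ℝ] E)
    (hpos : ∀ x : E, 0 ≤ x → 0 ≤ T x)
    (hoc : ∀ A : Set E, A ⊆ Set.univ → A.Nonempty → DirectedOn (· ≥ ·) A →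
      IsGLBIn Set.univ A 0 → IsGLBIn Set.univ (T '' A) 0)
    {u : ℕ → E} {a : E} (h : OrderConv u a) :
    OrderConv (fun n => T (u n)) (T a) := by
  obtain ⟨p, hp, hp0, hpb⟩ := h
  refine ⟨fun n => T (p n), fun i j hij => pos_linmap_mono hpos (hp hij), ?_, ?_⟩
  · have hglb : IsGLBIn Set.univ (T '' Set.range p) 0 := by
      refine hoc (Set.range p) (Set.subset_univ _) ⟨p 0, 0, rfl⟩ ?_ ?_
      · rintro x ⟨i, rfl⟩ y ⟨j, rfl⟩
        exact ⟨p (max i j), ⟨max i j, rfl⟩, hp (le_max_left i j), hp (le_max_right i j)⟩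
      · exact ⟨fun x hx => hp0.1 hx, fun b _ hb => hp0.2 hb⟩
    constructor
    · rintro x ⟨n, rfl⟩
      exact hglb.1 _ ⟨p n, ⟨n, rfl⟩, rfl⟩
    · intro b hb
      refine hglb.2 b trivial ?_
      rintro x ⟨y, ⟨n, rfl⟩, rfl⟩
      exact hb ⟨n, rfl⟩
  · intro n
    calc |T (u n) - T a| = |T (u n - a)| := by rw [map_sub]
      _ ≤ T |u n - a| := pos_linmap_abs hpos _
      _ ≤ T (p n) := pos_linmap_mono hpos (hpb n)

private lemma my_sum_le {n : ℕ} {a b : ℕ → E} (h : ∀ i ∈ Finset.range n, a i ≤ b i) :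
    ∑ i ∈ Finset.range n, a i ≤ ∑ i ∈ Finset.range n, b i := by
  induction n with
  | zero => simp
  | succ n ih =>
    rw [Finset.sum_range_succ, Finset.sum_range_succ]
    exact add_le_add
      (ih fun i hi => h i (Finset.mem_range.mpr (Nat.lt_succ_of_lt (Finset.mem_range.mp hi))))
      (h n (Finset.self_mem_range_succ n))

private lemma idealE_zero {e : E} : (0 : E) ∈ idealE e :=
  ⟨0, le_rfl, by simp⟩

private lemma idealE_add {e a b : E} (ha : a ∈ idealE e) (hb : b ∈ idealE e) :
    a + b ∈ idealE e := by
  obtain ⟨k1, hk1, h1⟩ := ha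
  obtain ⟨k2, hk2, h2⟩ := hb
  exact ⟨k1 + k2, add_nonneg hk1 hk2,
    (abs_add_le a b).trans (by rw [add_smul]; exact add_le_add h1 h2)⟩

private lemma idealE_sum {e : E} {n : ℕ} {a : ℕ → E}
    (ha : ∀ k, a k ∈ idealE e) : ∑ k ∈ Finset.range n, a k ∈ idealE e := by
  induction n with
  | zero => simpa using (idealE_zero : (0 : E) ∈ idealE e)
  | succ n ih => rw [Finset.sum_range_succ]; exact idealE_add ih (ha n)

end AuxLemmas

/-- For `f, g ∈ E_e`:  `(1/n) ∑_{k=0}^{n-1} T((S^k f)·g) → Tf·Tg` in order iff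
`T(L_S f · g) = Tf·Tg`. -/
theorem cesaro_T_mul_iff (T S : E →ₗ[ℝ] E) (e : E) (h : IsCEPS T S e)
    (m : E → E → E) (hm : IsFAlgMulOn e m)
    (f g : E) (hf : f ∈ idealE e) (hg : g ∈ idealE e)
    (l : E) (hl : OrderConv (ces S f) l) :
    OrderConv (fun n => (n : ℝ)⁻¹ • ∑ k ∈ Finset.range n, T (m ((S ^ k) f) g))
        (m (T f) (T g)) ↔
      T (m l g) = m (T f) (T g) := by
  -- destructure hypotheses
  obtain ⟨hDC, hwu, hT, hTe, hS, hSoc, hSe, hband⟩ := h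
  obtain ⟨-, -, -, hTpos', hToc, -, -, -, -⟩ := hT
  have hTpos : ∀ x : E, 0 ≤ x → 0 ≤ T x := fun x hx => hTpos' x trivial hx
  obtain ⟨hmmem, hmcomm, hmadd, hmsmul, -, -, -, hmcont⟩ := hm
  have he0 : (0 : E) ≤ e := hwu.1.le
  obtain ⟨κf, hκf, hbf⟩ := hf
  -- S is monotone and commutes with abs
  have hSmono : ∀ a b : E, a ≤ b → S a ≤ S b := by
    intro a b hab
    have : S a ⊔ S b = S b := by rw [← hS a b, sup_eq_right.mpr hab]
    calc S a ≤ S a ⊔ S b := le_sup_left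
      _ = S b := this
  have hSabs : ∀ x : E, |S x| = S |x| := by
    intro x
    show S x ⊔ -S x = S (x ⊔ -x)
    rw [hS x (-x), map_neg]
  -- powers of S preserve the bound
  have hSk : ∀ k : ℕ, |(S ^ k) f| ≤ κf • e := by
    intro k
    induction k with
    | zero => simpa using hbf
    | succ k ih =>
      have h1 : (S ^ (k + 1)) f = S ((S ^ k) f) := by
        rw [pow_succ']; rfl
      rw [h1, hSabs]
      have h2 : S |(S ^ k) f| ≤ S (κf • e) := hSmono _ _ ih
      rwa [map_smul, hSe] at h2
  have hSkmem : ∀ k : ℕ, (S ^ k) f ∈ idealE e := fun k => ⟨κf, hκf, hSk k⟩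
  -- bound on the Cesàro means
  have hcesb : ∀ n, |ces S f n| ≤ κf • e := by
    intro n
    rcases Nat.eq_zero_or_pos n with rfl | hn
    · simp [ces]
      exact smul_nonneg hκf he0
    · have hub : ∑ k ∈ Finset.range n, (S ^ k) f ≤ n • (κf • e) := by
        calc ∑ k ∈ Finset.range n, (S ^ k) f
            ≤ ∑ _k ∈ Finset.range n, κf • e :=
              my_sum_le fun i _ => (le_abs_self _).trans (hSk i)
          _ = n • (κf • e) := by rw [Finset.sum_const, Finset.card_range]
      have hlb : -(∑ k ∈ Finset.range n, (S ^ k) f) ≤ n • (κf • e) := by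
        have h5 : ∑ _k ∈ Finset.range n, -(κf • e) ≤ ∑ k ∈ Finset.range n, (S ^ k) f :=
          my_sum_le fun i _ => neg_le.mp ((neg_le_abs ((S ^ i) f)).trans (hSk i))
        have h6 : -(n • (κf • e)) ≤ ∑ k ∈ Finset.range n, (S ^ k) f := by
          calc -(n • (κf • e)) = ∑ _k ∈ Finset.range n, -(κf • e) := by
                rw [Finset.sum_const, Finset.card_range, neg_nsmul]
            _ ≤ _ := h5
        exact neg_le.mp h6
      have hcast : ∀ x : E, (n : ℝ)⁻¹ • ((n : ℕ) • x) = x := by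
        intro x
        rw [← Nat.cast_smul_eq_nsmul ℝ n x, smul_smul,
          inv_mul_cancel₀ (Nat.cast_ne_zero.mpr hn.ne')]
        exact one_smul ℝ x
      refine abs_le'.mpr ⟨?_, ?_⟩
      · calc ces S f n = (n : ℝ)⁻¹ • ∑ k ∈ Finset.range n, (S ^ k) f := rfl
          _ ≤ (n : ℝ)⁻¹ • (n • (κf • e)) :=
              smul_le_smul_of_nonneg_left hub (by positivity)
          _ = κf • e := hcast _
      · calc -ces S f n = (n : ℝ)⁻¹ • (-(∑ k ∈ Finset.range n, (S ^ k) f)) := by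
              rw [smul_neg]; rfl
          _ ≤ (n : ℝ)⁻¹ • (n • (κf • e)) :=
              smul_le_smul_of_nonneg_left hlb (by positivity)
          _ = κf • e := hcast _
  have hcesmem : ∀ n, ces S f n ∈ idealE e := fun n => ⟨κf, hκf, hcesb n⟩
  -- l belongs to the ideal
  have hlmem : l ∈ idealE e := by
    obtain ⟨p, hp, hp0, hpb⟩ := hl
    refine ⟨κf, hκf, ?_⟩
    have hb : ∀ n, |l| - κf • e ≤ p n := by
      intro n
      have : |l| ≤ |ces S f n| + |ces S f n - l| := by
        have he' : l = ces S f n - (ces S f n - l) := by abel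
        calc |l| = |ces S f n + -(ces S f n - l)| := by rw [← sub_eq_add_neg, ← he']
          _ ≤ |ces S f n| + |-(ces S f n - l)| := abs_add_le _ _
          _ = |ces S f n| + |ces S f n - l| := by rw [abs_neg]
      exact sub_le_iff_le_add'.mpr (this.trans (add_le_add (hcesb n) (hpb n)))
    have := le_zero_of_lb hp0 hb
    exact sub_nonpos.mp this
  -- negation and splitting of g in the multiplication
  have hidneg : ∀ x ∈ idealE e, -x ∈ idealE e := by
    rintro x ⟨k, hk, hb⟩
    exact ⟨k, hk, by rwa [abs_neg]⟩
  have hgpmem : g⁺ ∈ idealE e := by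
    obtain ⟨k, hk, hb⟩ := hg
    refine ⟨k, hk, ?_⟩
    rw [abs_of_nonneg (posPart_nonneg g)]
    exact (sup_le (le_abs_self g) (abs_nonneg g)).trans hb
  have hgnmem : g⁻ ∈ idealE e := by
    obtain ⟨k, hk, hb⟩ := hg
    refine ⟨k, hk, ?_⟩
    rw [abs_of_nonneg (negPart_nonneg g)]
    exact (sup_le (neg_le_abs g) (abs_nonneg g)).trans hb
  have hsplit : ∀ x ∈ idealE e, m x g = m x g⁺ - m x g⁻ := by
    intro x hx
    have h1 : m x g = m g x := hmcomm x hx g hg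
    have h2 : g = g⁺ + -g⁻ := by rw [← sub_eq_add_neg, posPart_sub_negPart]
    have h3 : m g x = m g⁺ x + m (-g⁻) x := by
      have h2' : m g x = m (g⁺ + -g⁻) x := by rw [← h2]
      rw [h2']
      exact hmadd g⁺ hgpmem (-g⁻) (hidneg _ hgnmem) x hx
    have h4 : m (-g⁻) x = -m g⁻ x := by
      have := hmsmul (-1) g⁻ hgnmem x hx
      rwa [neg_one_smul, neg_one_smul] at this
    rw [h1, h3, h4, ← sub_eq_add_neg, hmcomm g⁺ hgpmem x hx, hmcomm g⁻ hgnmem x hx]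
  -- sum formula for the multiplication
  have hmzero : ∀ x ∈ idealE e, m 0 x = 0 := by
    intro x hx
    have := hmsmul 0 0 idealE_zero x hx
    rwa [zero_smul, zero_smul] at this
  have hmsum : ∀ (n : ℕ) (x : E), x ∈ idealE e →
      m (∑ k ∈ Finset.range n, (S ^ k) f) x = ∑ k ∈ Finset.range n, m ((S ^ k) f) x := by
    intro n x hx
    induction n with
    | zero => simpa using hmzero x hx
    | succ n ih =>
      rw [Finset.sum_range_succ, Finset.sum_range_succ,
        hmadd _ (idealE_sum hSkmem) _ (hSkmem n) x hx, ih]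
  -- the statement's sequence equals T ∘ (m (ces ·) g)
  have hkey : (fun n : ℕ => (n : ℝ)⁻¹ • ∑ k ∈ Finset.range n, T (m ((S ^ k) f) g)) =
      fun n => T (m (ces S f n) g) := by
    funext n
    have h1 : m (ces S f n) g = (n : ℝ)⁻¹ • ∑ k ∈ Finset.range n, m ((S ^ k) f) g := by
      show m ((n : ℝ)⁻¹ • ∑ k ∈ Finset.range n, (S ^ k) f) g = _
      rw [hmsmul _ _ (idealE_sum hSkmem) g hg, hmsum n g hg]
    rw [h1, map_smul, map_sum]
  -- order convergence of m (ces n) g to m l g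
  have h1 : OrderConv (fun n => m (ces S f n) g⁺) (m l g⁺) :=
    hmcont g⁺ hgpmem (posPart_nonneg g) (ces S f) l hcesmem hlmem hl
  have h2 : OrderConv (fun n => m (ces S f n) g⁻) (m l g⁻) :=
    hmcont g⁻ hgnmem (negPart_nonneg g) (ces S f) l hcesmem hlmem hl
  have hconv : OrderConv (fun n => m (ces S f n) g) (m l g) := by
    have hE : (fun n => m (ces S f n) g) =
        fun n => m (ces S f n) g⁺ - m (ces S f n) g⁻ :=
      funext fun n => hsplit _ (hcesmem n)
    rw [hE, hsplit l hlmem]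
    exact orderConv_sub h1 h2
  have hTconv : OrderConv (fun n => T (m (ces S f n) g)) (T (m l g)) :=
    condexp_orderConv T hTpos hToc hconv
  rw [hkey]
  constructor
  · intro hcv
    exact orderConv_unique hTconv hcv
  · intro heq
    rw [← heq]
    exact hTconv
end
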